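/- arXiv:1802.02019 — 3 statements merged into one kernel-verified Lean document; each statement's English description precedes it below -/
import Mathlib

section
/- Suppose that for every matrix-valued function Z ∈ (C^{n+r,α})^{m×m} one has the convergence Z^{(r)} + Σ_{j=1}^{r} A_{r−j}(·,ε) Z^{(r−j)} → Z^{(r)} + Σ_{j=1}^{r} A_{r−j}(·,0) Z^{(r−j)} in (C^{n,α})^{m×m} as ε → 0+. Then A_{r−j}(·,ε) → A_{r−j}(·,0) in (C^{n,α})^{m×m} as ε → 0+ for every j ∈ {1,…,r}. -/
open Set Filter Topology

noncomputable section

/-- `x` belongs to the Hölder space `C^{n,α}([a,b],ℂ)`: it is `n` times continuously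
differentiable on `[a,b]` and the Hölder seminorm of `x⁽ⁿ⁾` is finite. -/
def HolMem (a b : ℝ) (n : ℕ) (α : ℝ) (x : ℝ → ℂ) : Prop :=
  ContDiffOn ℝ n x (Set.Icc a b) ∧
    ∃ C : ℝ, ∀ t₁ ∈ Set.Icc a b, ∀ t₂ ∈ Set.Icc a b, t₁ < t₂ →
      ‖iteratedDerivWithin n x (Set.Icc a b) t₂ - iteratedDerivWithin n x (Set.Icc a b) t₁‖ ≤
        C * (t₂ - t₁) ^ α

/-- The Hölder seminorm `‖x‖'_{n,α}`. -/
def holSemiNorm (a b : ℝ) (n : ℕ) (α : ℝ) (x : ℝ → ℂ) : ℝ :=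
  sSup { s : ℝ | ∃ t₁ ∈ Set.Icc a b, ∃ t₂ ∈ Set.Icc a b, t₁ < t₂ ∧
    s = ‖iteratedDerivWithin n x (Set.Icc a b) t₂ - iteratedDerivWithin n x (Set.Icc a b) t₁‖ /
        (t₂ - t₁) ^ α }

/-- The Hölder norm `‖x‖_{n,α} = ∑_{j=0}^n max_{[a,b]} |x⁽ʲ⁾| + ‖x‖'_{n,α}`. -/
def holNorm (a b : ℝ) (n : ℕ) (α : ℝ) (x : ℝ → ℂ) : ℝ :=
  (∑ j ∈ Finset.range (n + 1),
      sSup { s : ℝ | ∃ t ∈ Set.Icc a b, s = ‖iteratedDerivWithin j x (Set.Icc a b) t‖ }) +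
    holSemiNorm a b n α x

/-- Vector-valued Hölder class `(C^{n,α})^k`. -/
def vHolMem (a b : ℝ) (n : ℕ) (α : ℝ) {k : ℕ} (x : ℝ → (Fin k → ℂ)) : Prop :=
  ∀ i, HolMem a b n α (fun t => x t i)

/-- Norm on `(C^{n,α})^k`: the sum of the norms of the entries. -/
def vHolNorm (a b : ℝ) (n : ℕ) (α : ℝ) {k : ℕ} (x : ℝ → (Fin k → ℂ)) : ℝ :=
  ∑ i, holNorm a b n α (fun t => x t i)

/-- Matrix-valued Hölder class `(C^{n,α})^{k×l}`. -/
def mHolMem (a b : ℝ) (n : ℕ) (α : ℝ) {k l : ℕ} (X : ℝ → Matrix (Fin k) (Fin l) ℂ) : Prop :=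
  ∀ i j, HolMem a b n α (fun t => X t i j)

/-- Norm on `(C^{n,α})^{k×l}`: the sum of the norms of the entries. -/
def mHolNorm (a b : ℝ) (n : ℕ) (α : ℝ) {k l : ℕ} (X : ℝ → Matrix (Fin k) (Fin l) ℂ) : ℝ :=
  ∑ i, ∑ j, holNorm a b n α (fun t => X t i j)

/-- Entrywise `p`-th derivative of a vector-valued function on `[a,b]`. -/
def vDeriv (a b : ℝ) (p : ℕ) {k : ℕ} (y : ℝ → (Fin k → ℂ)) : ℝ → (Fin k → ℂ) :=
  fun t i => iteratedDerivWithin p (fun s => y s i) (Set.Icc a b) t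

/-- Entrywise `p`-th derivative of a matrix-valued function on `[a,b]`. -/
def mDeriv (a b : ℝ) (p : ℕ) {k l : ℕ} (Y : ℝ → Matrix (Fin k) (Fin l) ℂ) :
    ℝ → Matrix (Fin k) (Fin l) ℂ :=
  fun t i j => iteratedDerivWithin p (fun s => Y s i j) (Set.Icc a b) t

/-- The differential expression `(L y)(t) = y⁽ʳ⁾(t) + ∑_{j=1}^r A_{r-j}(t) y⁽ʳ⁻ʲ⁾(t)`;
here `A j` denotes the coefficient matrix of `y⁽ʲ⁾`, for `0 ≤ j ≤ r-1`. -/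
def Lop (a b : ℝ) (r : ℕ) {m : ℕ} (A : Fin r → ℝ → Matrix (Fin m) (Fin m) ℂ)
    (y : ℝ → (Fin m → ℂ)) : ℝ → (Fin m → ℂ) :=
  fun t => vDeriv a b r y t + ∑ j : Fin r, (A j t).mulVec (vDeriv a b (j : ℕ) y t)

/-- The matrix analogue of `Lop`, applied to matrix-valued functions. -/
def LopM (a b : ℝ) (r : ℕ) {m k : ℕ} (A : Fin r → ℝ → Matrix (Fin m) (Fin m) ℂ)
    (Z : ℝ → Matrix (Fin m) (Fin k) ℂ) : ℝ → Matrix (Fin m) (Fin k) ℂ :=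
  fun t => mDeriv a b r Z t + ∑ j : Fin r, A j t * mDeriv a b (j : ℕ) Z t

/-- `y` is a solution in `(C^{n+r,α})^m` of the problem `L y = f` on `[a,b]`, `B y = c`. -/
def IsSol (a b : ℝ) (n : ℕ) (α : ℝ) (r m : ℕ)
    (A : Fin r → ℝ → Matrix (Fin m) (Fin m) ℂ)
    (B : (ℝ → (Fin m → ℂ)) →ₗ[ℂ] (Fin (r * m) → ℂ))
    (f : ℝ → (Fin m → ℂ)) (c : Fin (r * m) → ℂ) (y : ℝ → (Fin m → ℂ)) : Prop :=
  vHolMem a b (n + r) α y ∧ (∀ t ∈ Set.Icc a b, Lop a b r A y t = f t) ∧ B y = c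

/-- Limit Condition (I): `A_{r-j}(·,ε) → A_{r-j}(·,0)` in `(C^{n,α})^{m×m}` as `ε → 0+`. -/
def CondI (a b : ℝ) (n : ℕ) (α : ℝ) (r m : ℕ)
    (A : ℝ → Fin r → ℝ → Matrix (Fin m) (Fin m) ℂ) : Prop :=
  ∀ j : Fin r,
    Tendsto (fun ε => mHolNorm a b n α (fun t => A ε j t - A 0 j t))
      (nhdsWithin 0 (Set.Ioi 0)) (nhds 0)

/-- Limit Condition (II): `B(ε)y → B(0)y` in `ℂ^{rm}` as `ε → 0+`,
for every `y ∈ (C^{n+r,α})^m`. -/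
def CondII (a b : ℝ) (n : ℕ) (α : ℝ) (r m : ℕ)
    (B : ℝ → (ℝ → (Fin m → ℂ)) →ₗ[ℂ] (Fin (r * m) → ℂ)) : Prop :=
  ∀ y : ℝ → (Fin m → ℂ), vHolMem a b (n + r) α y →
    Tendsto (fun ε => B ε y) (nhdsWithin 0 (Set.Ioi 0)) (nhds (B 0 y))

/-- Condition (0): the homogeneous problem `L(0)y = 0`, `B(0)y = 0` has only the
trivial solution in `(C^{n+r,α})^m`. -/
def Cond0 (a b : ℝ) (n : ℕ) (α : ℝ) (r m : ℕ)
    (A : Fin r → ℝ → Matrix (Fin m) (Fin m) ℂ)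
    (B : (ℝ → (Fin m → ℂ)) →ₗ[ℂ] (Fin (r * m) → ℂ)) : Prop :=
  ∀ y : ℝ → (Fin m → ℂ), vHolMem a b (n + r) α y →
    (∀ t ∈ Set.Icc a b, Lop a b r A y t = 0) → B y = 0 →
    ∀ t ∈ Set.Icc a b, y t = 0

/-- Condition (∗): for every `ε ∈ [0,ε₁)` and arbitrary data `f ∈ (C^{n,α})^m`, `c ∈ ℂ^{rm}`,
the problem `L(ε)y = f`, `B(ε)y = c` has a unique solution `y ∈ (C^{n+r,α})^m`
(uniqueness is understood as equality on `[a,b]`). -/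
def CondStar (a b : ℝ) (n : ℕ) (α : ℝ) (r m : ℕ) (ε₁ : ℝ)
    (A : ℝ → Fin r → ℝ → Matrix (Fin m) (Fin m) ℂ)
    (B : ℝ → (ℝ → (Fin m → ℂ)) →ₗ[ℂ] (Fin (r * m) → ℂ)) : Prop :=
  ∀ ε ∈ Set.Ico (0 : ℝ) ε₁, ∀ f : ℝ → (Fin m → ℂ), vHolMem a b n α f →
    ∀ c : Fin (r * m) → ℂ,
      ∃ y, IsSol a b n α r m (A ε) (B ε) f c y ∧
        ∀ y', IsSol a b n α r m (A ε) (B ε) f c y' → Set.EqOn y' y (Set.Icc a b)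

/-- Condition (∗∗): if `f(·,ε) → f(·,0)` in `(C^{n,α})^m` and `c(ε) → c(0)` in `ℂ^{rm}`
as `ε → 0+`, then the solutions satisfy `y(·,ε) → y(·,0)` in `(C^{n+r,α})^m`. -/
def CondStarStar (a b : ℝ) (n : ℕ) (α : ℝ) (r m : ℕ) (ε₁ : ℝ)
    (A : ℝ → Fin r → ℝ → Matrix (Fin m) (Fin m) ℂ)
    (B : ℝ → (ℝ → (Fin m → ℂ)) →ₗ[ℂ] (Fin (r * m) → ℂ)) : Prop :=
  ∀ (f : ℝ → ℝ → (Fin m → ℂ)) (c : ℝ → Fin (r * m) → ℂ) (y : ℝ → ℝ → (Fin m → ℂ)),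
    (∀ ε ∈ Set.Ico (0 : ℝ) ε₁, vHolMem a b n α (f ε) ∧
      IsSol a b n α r m (A ε) (B ε) (f ε) (c ε) (y ε)) →
    Tendsto (fun ε => vHolNorm a b n α (fun t => f ε t - f 0 t))
      (nhdsWithin 0 (Set.Ioi 0)) (nhds 0) →
    Tendsto c (nhdsWithin 0 (Set.Ioi 0)) (nhds (c 0)) →
    Tendsto (fun ε => vHolNorm a b (n + r) α (fun t => y ε t - y 0 t))
      (nhdsWithin 0 (Set.Ioi 0)) (nhds 0)



namespace CondIAux

variable {a b : ℝ} {n : ℕ} {α : ℝ}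

/-- sup of j-th derivative norm -/
def SS (a b : ℝ) (j : ℕ) (x : ℝ → ℂ) : ℝ :=
  sSup { s : ℝ | ∃ t ∈ Set.Icc a b, s = ‖iteratedDerivWithin j x (Set.Icc a b) t‖ }

lemma SS_nonneg (a b : ℝ) (j : ℕ) (x : ℝ → ℂ) : 0 ≤ SS a b j x := by
  apply Real.sSup_nonneg
  rintro s ⟨t, ht, rfl⟩
  exact norm_nonneg _

lemma holSemiNorm_nonneg (a b : ℝ) (n : ℕ) {α : ℝ} (hα0 : 0 < α) (x : ℝ → ℂ) :
    0 ≤ holSemiNorm a b n α x := by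
  apply Real.sSup_nonneg
  rintro s ⟨t₁, h₁, t₂, h₂, hlt, rfl⟩
  exact div_nonneg (norm_nonneg _) (Real.rpow_nonneg (by linarith) _)

lemma holNorm_eq (a b : ℝ) (n : ℕ) (α : ℝ) (x : ℝ → ℂ) :
    holNorm a b n α x = (∑ j ∈ Finset.range (n + 1), SS a b j x) + holSemiNorm a b n α x := rfl

lemma holNorm_nonneg (a b : ℝ) (n : ℕ) {α : ℝ} (hα0 : 0 < α) (x : ℝ → ℂ) :
    0 ≤ holNorm a b n α x := by
  rw [holNorm_eq]
  have := holSemiNorm_nonneg a b n hα0 x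
  have : 0 ≤ ∑ j ∈ Finset.range (n + 1), SS a b j x :=
    Finset.sum_nonneg fun j _ => SS_nonneg a b j x
  linarith [holSemiNorm_nonneg a b n hα0 x]

lemma SS_le (hab : a ≤ b) {j : ℕ} {x : ℝ → ℂ} {c : ℝ}
    (hc : ∀ t ∈ Set.Icc a b, ‖iteratedDerivWithin j x (Set.Icc a b) t‖ ≤ c) :
    SS a b j x ≤ c := by
  apply Real.sSup_le
  · rintro s ⟨t, ht, rfl⟩; exact hc t ht
  · exact le_trans (norm_nonneg _) (hc a ⟨le_refl a, hab⟩)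

lemma le_SS {j : ℕ} {x : ℝ → ℂ}
    (hcont : ContinuousOn (iteratedDerivWithin j x (Set.Icc a b)) (Set.Icc a b))
    {t : ℝ} (ht : t ∈ Set.Icc a b) :
    ‖iteratedDerivWithin j x (Set.Icc a b) t‖ ≤ SS a b j x := by
  obtain ⟨C, hC⟩ := isCompact_Icc.exists_bound_of_continuousOn hcont
  exact le_csSup ⟨C, by rintro s ⟨u, hu, rfl⟩; exact hC u hu⟩ ⟨t, ht, rfl⟩

lemma holSemiNorm_le (hab : a < b) (hα0 : 0 < α) {x : ℝ → ℂ} {c : ℝ}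
    (hc : ∀ t₁ ∈ Set.Icc a b, ∀ t₂ ∈ Set.Icc a b, t₁ < t₂ →
      ‖iteratedDerivWithin n x (Set.Icc a b) t₂ - iteratedDerivWithin n x (Set.Icc a b) t₁‖ ≤
        c * (t₂ - t₁) ^ α) :
    holSemiNorm a b n α x ≤ c := by
  have hc0 : 0 ≤ c := by
    have h1 := hc a ⟨le_refl a, le_of_lt hab⟩ b ⟨le_of_lt hab, le_refl b⟩ hab
    have h2 : (0:ℝ) < (b - a) ^ α := Real.rpow_pos_of_pos (by linarith) _
    nlinarith [norm_nonneg (iteratedDerivWithin n x (Set.Icc a b) b -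
      iteratedDerivWithin n x (Set.Icc a b) a)]
  apply Real.sSup_le _ hc0
  rintro s ⟨t₁, h₁, t₂, h₂, hlt, rfl⟩
  rw [div_le_iff₀ (Real.rpow_pos_of_pos (by linarith) _)]
  exact hc t₁ h₁ t₂ h₂ hlt

lemma le_holSemiNorm (hα0 : 0 < α) {x : ℝ → ℂ}
    (hx : HolMem a b n α x) {t₁ t₂ : ℝ} (h₁ : t₁ ∈ Set.Icc a b) (h₂ : t₂ ∈ Set.Icc a b)
    (hlt : t₁ < t₂) :
    ‖iteratedDerivWithin n x (Set.Icc a b) t₂ - iteratedDerivWithin n x (Set.Icc a b) t₁‖ ≤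
      holSemiNorm a b n α x * (t₂ - t₁) ^ α := by
  obtain ⟨C, hC⟩ := hx.2
  have hpos : (0:ℝ) < (t₂ - t₁) ^ α := Real.rpow_pos_of_pos (by linarith) _
  have hmem : ‖iteratedDerivWithin n x (Set.Icc a b) t₂ -
      iteratedDerivWithin n x (Set.Icc a b) t₁‖ / (t₂ - t₁) ^ α ≤ holSemiNorm a b n α x := by
    apply le_csSup
    · refine ⟨C, ?_⟩
      rintro s ⟨u₁, hu₁, u₂, hu₂, hu, rfl⟩
      rw [div_le_iff₀ (Real.rpow_pos_of_pos (by linarith) _)]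
      exact hC u₁ hu₁ u₂ hu₂ hu
    · exact ⟨t₁, h₁, t₂, h₂, hlt, rfl⟩
  calc ‖iteratedDerivWithin n x (Set.Icc a b) t₂ - iteratedDerivWithin n x (Set.Icc a b) t₁‖
      = ‖iteratedDerivWithin n x (Set.Icc a b) t₂ -
          iteratedDerivWithin n x (Set.Icc a b) t₁‖ / (t₂ - t₁) ^ α * (t₂ - t₁) ^ α := by
        field_simp
    _ ≤ holSemiNorm a b n α x * (t₂ - t₁) ^ α := by
        exact mul_le_mul_of_nonneg_right hmem (le_of_lt hpos)

lemma SS_le_holNorm (hα0 : 0 < α) {j : ℕ} (hj : j ≤ n) (x : ℝ → ℂ) :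
    SS a b j x ≤ holNorm a b n α x := by
  rw [holNorm_eq]
  have h1 : SS a b j x ≤ ∑ j' ∈ Finset.range (n + 1), SS a b j' x :=
    Finset.single_le_sum (fun i _ => SS_nonneg a b i x)
      (Finset.mem_range.mpr (Nat.lt_succ_of_le hj))
  linarith [holSemiNorm_nonneg a b n hα0 x]

lemma holSemiNorm_le_holNorm (a b : ℝ) (n : ℕ) (α : ℝ) (x : ℝ → ℂ) :
    holSemiNorm a b n α x ≤ holNorm a b n α x := by
  rw [holNorm_eq]
  have : 0 ≤ ∑ j ∈ Finset.range (n + 1), SS a b j x :=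
    Finset.sum_nonneg fun j _ => SS_nonneg a b j x
  linarith

lemma norm_DD_le_holNorm (hα0 : 0 < α) {x : ℝ → ℂ} (hx : HolMem a b n α x)
    {j : ℕ} (hj : j ≤ n) {t : ℝ} (ht : t ∈ Set.Icc a b) (hab : a < b) :
    ‖iteratedDerivWithin j x (Set.Icc a b) t‖ ≤ holNorm a b n α x :=
  le_trans
    (le_SS (hx.1.continuousOn_iteratedDerivWithin (by exact_mod_cast hj) (uniqueDiffOn_Icc hab)) ht)
    (SS_le_holNorm hα0 hj x)

end CondIAux


namespace CondIAux

variable {a b : ℝ} {n : ℕ} {α : ℝ}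

lemma holNorm_congr (hab : a < b) {x y : ℝ → ℂ} (hxy : Set.EqOn x y (Set.Icc a b)) :
    holNorm a b n α x = holNorm a b n α y := by
  have hD : ∀ (j : ℕ), ∀ t ∈ Set.Icc a b,
      iteratedDerivWithin j x (Set.Icc a b) t = iteratedDerivWithin j y (Set.Icc a b) t :=
    fun j t ht => iteratedDerivWithin_congr hxy ht
  rw [holNorm_eq, holNorm_eq]
  congr 1
  · apply Finset.sum_congr rfl
    intro j _
    unfold SS
    congr 1
    ext s
    constructor
    · rintro ⟨t, ht, rfl⟩; exact ⟨t, ht, by rw [hD j t ht]⟩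
    · rintro ⟨t, ht, rfl⟩; exact ⟨t, ht, by rw [hD j t ht]⟩
  · unfold holSemiNorm
    congr 1
    ext s
    constructor
    · rintro ⟨t₁, h₁, t₂, h₂, hlt, rfl⟩
      exact ⟨t₁, h₁, t₂, h₂, hlt, by rw [hD n t₁ h₁, hD n t₂ h₂]⟩
    · rintro ⟨t₁, h₁, t₂, h₂, hlt, rfl⟩
      exact ⟨t₁, h₁, t₂, h₂, hlt, by rw [hD n t₁ h₁, hD n t₂ h₂]⟩

lemma holMem_add (hab : a < b) {x y : ℝ → ℂ} (hx : HolMem a b n α x) (hy : HolMem a b n α y) :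
    HolMem a b n α (fun t => x t + y t) := by
  obtain ⟨Cx, hCx⟩ := hx.2
  obtain ⟨Cy, hCy⟩ := hy.2
  refine ⟨hx.1.add hy.1, Cx + Cy, ?_⟩
  intro t₁ h₁ t₂ h₂ hlt
  have e1 : ∀ t ∈ Set.Icc a b, iteratedDerivWithin n (fun t => x t + y t) (Set.Icc a b) t =
      iteratedDerivWithin n x (Set.Icc a b) t + iteratedDerivWithin n y (Set.Icc a b) t :=
    fun t ht => iteratedDerivWithin_add ht (uniqueDiffOn_Icc hab) (hx.1 t ht) (hy.1 t ht)
  rw [e1 t₁ h₁, e1 t₂ h₂, add_mul]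
  calc ‖(iteratedDerivWithin n x (Set.Icc a b) t₂ + iteratedDerivWithin n y (Set.Icc a b) t₂) -
      (iteratedDerivWithin n x (Set.Icc a b) t₁ + iteratedDerivWithin n y (Set.Icc a b) t₁)‖
      ≤ ‖iteratedDerivWithin n x (Set.Icc a b) t₂ - iteratedDerivWithin n x (Set.Icc a b) t₁‖ +
        ‖iteratedDerivWithin n y (Set.Icc a b) t₂ - iteratedDerivWithin n y (Set.Icc a b) t₁‖ := by
        have : (iteratedDerivWithin n x (Set.Icc a b) t₂ +
            iteratedDerivWithin n y (Set.Icc a b) t₂) -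
            (iteratedDerivWithin n x (Set.Icc a b) t₁ +
            iteratedDerivWithin n y (Set.Icc a b) t₁) =
            (iteratedDerivWithin n x (Set.Icc a b) t₂ -
            iteratedDerivWithin n x (Set.Icc a b) t₁) +
            (iteratedDerivWithin n y (Set.Icc a b) t₂ -
            iteratedDerivWithin n y (Set.Icc a b) t₁) := by ring
        rw [this]
        exact norm_add_le _ _
    _ ≤ Cx * (t₂ - t₁) ^ α + Cy * (t₂ - t₁) ^ α :=
        add_le_add (hCx t₁ h₁ t₂ h₂ hlt) (hCy t₁ h₁ t₂ h₂ hlt)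

lemma holNorm_add_le (hab : a < b) (hα0 : 0 < α) {x y : ℝ → ℂ}
    (hx : HolMem a b n α x) (hy : HolMem a b n α y) :
    holNorm a b n α (fun t => x t + y t) ≤ holNorm a b n α x + holNorm a b n α y := by
  have hud := uniqueDiffOn_Icc hab
  rw [holNorm_eq (x := fun t => x t + y t), holNorm_eq (x := x), holNorm_eq (x := y)]
  have hS : ∀ j ≤ n, SS a b j (fun t => x t + y t) ≤ SS a b j x + SS a b j y := by
    intro j hj
    apply SS_le (le_of_lt hab)
    intro t ht
    have e1 : iteratedDerivWithin j (fun t => x t + y t) (Set.Icc a b) t =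
        iteratedDerivWithin j x (Set.Icc a b) t + iteratedDerivWithin j y (Set.Icc a b) t :=
      iteratedDerivWithin_add ht hud (hx.1.of_le (show (j : WithTop ℕ∞) ≤ n by exact_mod_cast hj) t ht)
        (hy.1.of_le (show (j : WithTop ℕ∞) ≤ n by exact_mod_cast hj) t ht)
    rw [e1]
    exact le_trans (norm_add_le _ _) (add_le_add
      (le_SS (hx.1.continuousOn_iteratedDerivWithin (by exact_mod_cast hj) hud) ht)
      (le_SS (hy.1.continuousOn_iteratedDerivWithin (by exact_mod_cast hj) hud) ht))
  have hH : holSemiNorm a b n α (fun t => x t + y t) ≤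
      holSemiNorm a b n α x + holSemiNorm a b n α y := by
    apply holSemiNorm_le hab hα0
    intro t₁ h₁ t₂ h₂ hlt
    have e1 : ∀ t ∈ Set.Icc a b, iteratedDerivWithin n (fun t => x t + y t) (Set.Icc a b) t =
        iteratedDerivWithin n x (Set.Icc a b) t + iteratedDerivWithin n y (Set.Icc a b) t :=
      fun t ht => iteratedDerivWithin_add ht hud (hx.1 t ht) (hy.1 t ht)
    rw [e1 t₁ h₁, e1 t₂ h₂, add_mul]
    have hd : (iteratedDerivWithin n x (Set.Icc a b) t₂ +
        iteratedDerivWithin n y (Set.Icc a b) t₂) -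
        (iteratedDerivWithin n x (Set.Icc a b) t₁ +
        iteratedDerivWithin n y (Set.Icc a b) t₁) =
        (iteratedDerivWithin n x (Set.Icc a b) t₂ -
        iteratedDerivWithin n x (Set.Icc a b) t₁) +
        (iteratedDerivWithin n y (Set.Icc a b) t₂ -
        iteratedDerivWithin n y (Set.Icc a b) t₁) := by ring
    rw [hd]
    exact le_trans (norm_add_le _ _)
      (add_le_add (le_holSemiNorm hα0 hx h₁ h₂ hlt) (le_holSemiNorm hα0 hy h₁ h₂ hlt))
  have hsum : ∑ j ∈ Finset.range (n + 1), SS a b j (fun t => x t + y t) ≤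
      ∑ j ∈ Finset.range (n + 1), (SS a b j x + SS a b j y) :=
    Finset.sum_le_sum fun j hj => hS j (Nat.lt_succ_iff.mp (Finset.mem_range.mp hj))
  rw [Finset.sum_add_distrib] at hsum
  linarith

lemma holMem_smul (hab : a < b) (c : ℂ) {x : ℝ → ℂ} (hx : HolMem a b n α x) :
    HolMem a b n α (fun t => c * x t) := by
  obtain ⟨Cx, hCx⟩ := hx.2
  have hcd : ContDiffOn ℝ n (fun t => c * x t) (Set.Icc a b) := hx.1.const_smul c
  refine ⟨hcd, ‖c‖ * Cx, ?_⟩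
  intro t₁ h₁ t₂ h₂ hlt
  have e1 : ∀ t ∈ Set.Icc a b, iteratedDerivWithin n (fun t => c * x t) (Set.Icc a b) t =
      c * iteratedDerivWithin n x (Set.Icc a b) t := fun t ht =>
    iteratedDerivWithin_const_smul ht (uniqueDiffOn_Icc hab) c (hx.1 t ht)
  rw [e1 t₁ h₁, e1 t₂ h₂, ← mul_sub]
  rw [norm_mul, mul_assoc]
  exact mul_le_mul_of_nonneg_left (hCx t₁ h₁ t₂ h₂ hlt) (norm_nonneg c)

lemma holNorm_smul_le (hab : a < b) (hα0 : 0 < α) (c : ℂ) {x : ℝ → ℂ}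
    (hx : HolMem a b n α x) :
    holNorm a b n α (fun t => c * x t) ≤ ‖c‖ * holNorm a b n α x := by
  have hud := uniqueDiffOn_Icc hab
  rw [holNorm_eq (x := fun t => c * x t), holNorm_eq (x := x), mul_add, Finset.mul_sum]
  have hS : ∀ j ≤ n, SS a b j (fun t => c * x t) ≤ ‖c‖ * SS a b j x := by
    intro j hj
    apply SS_le (le_of_lt hab)
    intro t ht
    have e : iteratedDerivWithin j (fun t => c * x t) (Set.Icc a b) t =
        c • iteratedDerivWithin j x (Set.Icc a b) t :=
      iteratedDerivWithin_const_smul ht hud c (hx.1.of_le (show (j : WithTop ℕ∞) ≤ n by exact_mod_cast hj) t ht)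
    rw [e, norm_smul]
    exact mul_le_mul_of_nonneg_left
      (le_SS (hx.1.continuousOn_iteratedDerivWithin (by exact_mod_cast hj) hud) ht)
      (norm_nonneg c)
  have hH : holSemiNorm a b n α (fun t => c * x t) ≤ ‖c‖ * holSemiNorm a b n α x := by
    apply holSemiNorm_le hab hα0
    intro t₁ h₁ t₂ h₂ hlt
    have e1 : ∀ t ∈ Set.Icc a b, iteratedDerivWithin n (fun t => c * x t) (Set.Icc a b) t =
        c * iteratedDerivWithin n x (Set.Icc a b) t := fun t ht =>
      iteratedDerivWithin_const_smul ht hud c (hx.1 t ht)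
    rw [e1 t₁ h₁, e1 t₂ h₂, ← mul_sub, norm_mul, mul_assoc]
    exact mul_le_mul_of_nonneg_left (le_holSemiNorm hα0 hx h₁ h₂ hlt) (norm_nonneg c)
  exact add_le_add (Finset.sum_le_sum fun j hj =>
    hS j (Nat.lt_succ_iff.mp (Finset.mem_range.mp hj))) hH

lemma holMem_sub (hab : a < b) {x y : ℝ → ℂ} (hx : HolMem a b n α x) (hy : HolMem a b n α y) :
    HolMem a b n α (fun t => x t - y t) := by
  have h1 : HolMem a b n α (fun t => x t + (-1 : ℂ) * y t) :=
    holMem_add hab hx (holMem_smul hab (-1) hy)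
  have : (fun t => x t - y t) = (fun t => x t + (-1 : ℂ) * y t) := by funext t; ring
  rw [this]
  exact h1

lemma holNorm_sub_le (hab : a < b) (hα0 : 0 < α) {x y : ℝ → ℂ}
    (hx : HolMem a b n α x) (hy : HolMem a b n α y) :
    holNorm a b n α (fun t => x t - y t) ≤ holNorm a b n α x + holNorm a b n α y := by
  have : (fun t => x t - y t) = (fun t => x t + (-1 : ℂ) * y t) := by funext t; ring
  rw [this]
  calc holNorm a b n α (fun t => x t + (-1 : ℂ) * y t)
      ≤ holNorm a b n α x + holNorm a b n α (fun t => (-1 : ℂ) * y t) :=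
        holNorm_add_le hab hα0 hx (holMem_smul hab (-1) hy)
    _ ≤ holNorm a b n α x + ‖(-1 : ℂ)‖ * holNorm a b n α y :=
        add_le_add_right (holNorm_smul_le hab hα0 (-1) hy) _
    _ = holNorm a b n α x + holNorm a b n α y := by simp

lemma holMem_zero (hab : a < b) : HolMem a b n α (fun _ : ℝ => (0 : ℂ)) := by
  refine ⟨contDiffOn_const, 0, ?_⟩
  intro t₁ h₁ t₂ h₂ hlt
  have e1 : ∀ t ∈ Set.Icc a b,
      iteratedDerivWithin n (fun _ : ℝ => (0 : ℂ)) (Set.Icc a b) t = 0 := by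
    intro t ht
    have h0 : (fun _ : ℝ => (0 : ℂ)) = (0 : ℂ) • (fun _ : ℝ => (0 : ℂ)) := by
      funext u; simp
    rw [h0, iteratedDerivWithin_const_smul ht (uniqueDiffOn_Icc hab) (0 : ℂ) contDiffWithinAt_const]
    simp
  rw [e1 t₁ h₁, e1 t₂ h₂]
  simp

lemma holNorm_zero_le (hab : a < b) (hα0 : 0 < α) :
    holNorm a b n α (fun _ : ℝ => (0 : ℂ)) ≤ 0 := by
  have h0 : (fun _ : ℝ => (0 : ℂ)) = (fun t => (0 : ℂ) * (fun _ : ℝ => (0:ℂ)) t) := by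
    funext u; simp
  calc holNorm a b n α (fun _ : ℝ => (0 : ℂ))
      = holNorm a b n α (fun t => (0 : ℂ) * (fun _ : ℝ => (0:ℂ)) t) := by rw [← h0]
    _ ≤ ‖(0:ℂ)‖ * holNorm a b n α (fun _ : ℝ => (0 : ℂ)) :=
        holNorm_smul_le hab hα0 0 (holMem_zero hab)
    _ = 0 := by simp

lemma holMem_sum (hab : a < b) {ι : Type*} (S : Finset ι) (f : ι → ℝ → ℂ)
    (hf : ∀ i ∈ S, HolMem a b n α (f i)) :
    HolMem a b n α (fun t => ∑ i ∈ S, f i t) := by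
  classical
  induction S using Finset.induction_on with
  | empty => simpa using holMem_zero hab
  | insert i S hnot ih =>
    simp only [Finset.sum_insert hnot]
    exact holMem_add hab (hf i (Finset.mem_insert_self i S))
      (ih fun j hj => hf j (Finset.mem_insert_of_mem hj))

lemma holNorm_sum_le (hab : a < b) (hα0 : 0 < α) {ι : Type*} (S : Finset ι) (f : ι → ℝ → ℂ)
    (hf : ∀ i ∈ S, HolMem a b n α (f i)) :
    holNorm a b n α (fun t => ∑ i ∈ S, f i t) ≤ ∑ i ∈ S, holNorm a b n α (f i) := by
  classical
  induction S using Finset.induction_on with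
  | empty => simpa using holNorm_zero_le hab hα0
  | insert i S hnot ih =>
    simp only [Finset.sum_insert hnot]
    calc holNorm a b n α (fun t => f i t + ∑ j ∈ S, f j t)
        ≤ holNorm a b n α (f i) + holNorm a b n α (fun t => ∑ j ∈ S, f j t) :=
          holNorm_add_le hab hα0 (hf i (Finset.mem_insert_self i S))
            (holMem_sum hab S f fun j hj => hf j (Finset.mem_insert_of_mem hj))
      _ ≤ holNorm a b n α (f i) + ∑ j ∈ S, holNorm a b n α (f j) :=
          add_le_add_right (ih fun j hj => hf j (Finset.mem_insert_of_mem hj)) _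

end CondIAux


namespace CondIAux

variable {a b : ℝ} {n : ℕ} {α : ℝ}

lemma abs_le_M {t : ℝ} (ht : t ∈ Set.Icc a b) : |t| ≤ |a| + |b| := by
  rcases abs_le.mp (le_refl |a|) with _
  have h1 : |t| ≤ max |a| |b| := abs_le_max_abs_abs ht.1 ht.2
  have h2 : max |a| |b| ≤ |a| + |b| :=
    max_le (le_add_of_nonneg_right (abs_nonneg b)) (le_add_of_nonneg_left (abs_nonneg a))
  linarith

lemma rpow_split (hab : a < b) (hα0 : 0 < α) (hα1 : α ≤ 1) {t₁ t₂ : ℝ}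
    (h₁ : t₁ ∈ Set.Icc a b) (h₂ : t₂ ∈ Set.Icc a b) (hlt : t₁ < t₂) :
    t₂ - t₁ ≤ (b - a) ^ (1 - α) * (t₂ - t₁) ^ α := by
  have hΔ : (0:ℝ) < t₂ - t₁ := by linarith
  have hle : t₂ - t₁ ≤ b - a := by
    have := h₁.1; have := h₂.2; linarith
  calc t₂ - t₁ = (t₂ - t₁) ^ ((1 - α) + α) := by
        rw [sub_add_cancel, Real.rpow_one]
    _ = (t₂ - t₁) ^ (1 - α) * (t₂ - t₁) ^ α := Real.rpow_add hΔ _ _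
    _ ≤ (b - a) ^ (1 - α) * (t₂ - t₁) ^ α :=
        mul_le_mul_of_nonneg_right
          (Real.rpow_le_rpow hΔ.le hle (by linarith)) (Real.rpow_nonneg hΔ.le _)

lemma DD_lipschitz (hab : a < b) {q : ℕ} {N : ℕ} (hqN : q < N) {x : ℝ → ℂ}
    (hx : ContDiffOn ℝ N x (Set.Icc a b)) {C : ℝ}
    (hC : ∀ t ∈ Set.Icc a b, ‖iteratedDerivWithin (q + 1) x (Set.Icc a b) t‖ ≤ C)
    {t₁ t₂ : ℝ} (h₁ : t₁ ∈ Set.Icc a b) (h₂ : t₂ ∈ Set.Icc a b) :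
    ‖iteratedDerivWithin q x (Set.Icc a b) t₂ - iteratedDerivWithin q x (Set.Icc a b) t₁‖ ≤
      C * |t₂ - t₁| := by
  have hud := uniqueDiffOn_Icc hab
  have hdiff : DifferentiableOn ℝ (iteratedDerivWithin q x (Set.Icc a b)) (Set.Icc a b) :=
    hx.differentiableOn_iteratedDerivWithin (by exact_mod_cast hqN) hud
  have hbound : ∀ u ∈ Set.Icc a b,
      ‖derivWithin (iteratedDerivWithin q x (Set.Icc a b)) (Set.Icc a b) u‖ ≤ C := by
    intro u hu
    rw [← iteratedDerivWithin_succ]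
    exact hC u hu
  have := Convex.norm_image_sub_le_of_norm_derivWithin_le hdiff hbound (convex_Icc a b) h₁ h₂
  simpa [Real.norm_eq_abs] using this

lemma DD_mul_id (hab : a < b) {x : ℝ → ℂ} (hx : ContDiffOn ℝ n x (Set.Icc a b))
    {j : ℕ} (hj : j ≤ n) :
    ∀ t ∈ Set.Icc a b,
      iteratedDerivWithin j (fun s : ℝ => (s : ℂ) * x s) (Set.Icc a b) t =
        (t : ℂ) * iteratedDerivWithin j x (Set.Icc a b) t +
          (j : ℂ) * iteratedDerivWithin (j - 1) x (Set.Icc a b) t := by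
  induction j with
  | zero => intro t ht; simp
  | succ j IH =>
    intro t ht
    have hud := uniqueDiffOn_Icc hab
    have hj' : j ≤ n := le_trans (Nat.le_succ j) hj
    have hIH := IH hj'
    rw [iteratedDerivWithin_succ,
      derivWithin_congr (fun u hu => hIH u hu) (hIH t ht)]
    have hDj : HasDerivWithinAt (iteratedDerivWithin j x (Set.Icc a b))
        (iteratedDerivWithin (j + 1) x (Set.Icc a b) t) (Set.Icc a b) t := by
      have h1 := ((hx.differentiableOn_iteratedDerivWithin
        (show (j : WithTop ℕ∞) < n by exact_mod_cast hj) hud) t ht).hasDerivWithinAt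
      rwa [← iteratedDerivWithin_succ] at h1
    have hid : HasDerivWithinAt (fun s : ℝ => (s : ℂ)) 1 (Set.Icc a b) t := by
      simpa using ((hasDerivAt_id t).ofReal_comp).hasDerivWithinAt (s := Set.Icc a b)
    have h1 : HasDerivWithinAt
        (fun u : ℝ => (u : ℂ) * iteratedDerivWithin j x (Set.Icc a b) u)
        (1 * iteratedDerivWithin j x (Set.Icc a b) t +
          (t : ℂ) * iteratedDerivWithin (j + 1) x (Set.Icc a b) t) (Set.Icc a b) t :=
      hid.mul hDj
    have h2 : HasDerivWithinAt
        (fun u : ℝ => (j : ℂ) * iteratedDerivWithin (j - 1) x (Set.Icc a b) u)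
        ((j : ℂ) * iteratedDerivWithin j x (Set.Icc a b) t) (Set.Icc a b) t := by
      cases j with
      | zero =>
        have he : (fun u : ℝ => ((0:ℕ) : ℂ) * iteratedDerivWithin (0 - 1) x (Set.Icc a b) u) =
            fun _ : ℝ => (0 : ℂ) := by funext u; simp
        rw [he]
        simpa using (hasDerivWithinAt_const t (Set.Icc a b) (0 : ℂ))
      | succ k =>
        have hDk : HasDerivWithinAt (iteratedDerivWithin k x (Set.Icc a b))
            (iteratedDerivWithin (k + 1) x (Set.Icc a b) t) (Set.Icc a b) t := by
          have h1 := ((hx.differentiableOn_iteratedDerivWithin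
            (show (k : WithTop ℕ∞) < n by
              have : k < n := by omega
              exact_mod_cast this) hud) t ht).hasDerivWithinAt
          rwa [← iteratedDerivWithin_succ] at h1
        simpa using hDk.const_mul ((k + 1 : ℕ) : ℂ)
    have hsum : HasDerivWithinAt (fun u : ℝ => (u : ℂ) * iteratedDerivWithin j x (Set.Icc a b) u +
        (j : ℂ) * iteratedDerivWithin (j - 1) x (Set.Icc a b) u) _ (Set.Icc a b) t := h1.add h2
    rw [hsum.derivWithin (hud.uniqueDiffWithinAt ht)]
    simp only [Nat.add_sub_cancel]
    push_cast
    ring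

lemma holder_mul_id (hab : a < b) (hα0 : 0 < α) (hα1 : α ≤ 1) {x : ℝ → ℂ}
    (hx : HolMem a b n α x) :
    ∀ t₁ ∈ Set.Icc a b, ∀ t₂ ∈ Set.Icc a b, t₁ < t₂ →
      ‖iteratedDerivWithin n (fun s : ℝ => (s : ℂ) * x s) (Set.Icc a b) t₂ -
        iteratedDerivWithin n (fun s : ℝ => (s : ℂ) * x s) (Set.Icc a b) t₁‖ ≤
      ((|a| + |b|) + ((n : ℝ) + 1) * (b - a) ^ (1 - α)) * holNorm a b n α x *
        (t₂ - t₁) ^ α := by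
  intro t₁ h₁ t₂ h₂ hlt
  have hud := uniqueDiffOn_Icc hab
  have hol := holNorm_nonneg a b n hα0 x
  set u := iteratedDerivWithin n x (Set.Icc a b) with hu
  set v := iteratedDerivWithin (n - 1) x (Set.Icc a b) with hv
  rw [DD_mul_id hab hx.1 (le_refl n) t₁ h₁, DD_mul_id hab hx.1 (le_refl n) t₂ h₂]
  have hdec : ((t₂ : ℂ) * u t₂ + (n : ℂ) * v t₂) - ((t₁ : ℂ) * u t₁ + (n : ℂ) * v t₁) =
      (t₂ : ℂ) * (u t₂ - u t₁) + ((t₂ : ℂ) - (t₁ : ℂ)) * u t₁ + (n : ℂ) * (v t₂ - v t₁) := by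
    ring
  rw [hdec]
  have hΔpos : (0:ℝ) < t₂ - t₁ := by linarith
  have hΔα : (0:ℝ) ≤ (t₂ - t₁) ^ α := Real.rpow_nonneg hΔpos.le _
  have hsplit := rpow_split hab hα0 hα1 h₁ h₂ hlt
  have T1 : ‖(t₂ : ℂ) * (u t₂ - u t₁)‖ ≤ (|a| + |b|) * (holNorm a b n α x * (t₂ - t₁) ^ α) := by
    rw [norm_mul, Complex.norm_real, Real.norm_eq_abs]
    exact mul_le_mul (abs_le_M h₂)
      (le_trans (le_holSemiNorm hα0 hx h₁ h₂ hlt)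
        (mul_le_mul_of_nonneg_right (holSemiNorm_le_holNorm a b n α x) hΔα))
      (norm_nonneg _) (le_trans (abs_nonneg t₂) (abs_le_M h₂))
  have T2 : ‖((t₂ : ℂ) - (t₁ : ℂ)) * u t₁‖ ≤
      (b - a) ^ (1 - α) * (t₂ - t₁) ^ α * holNorm a b n α x := by
    rw [norm_mul]
    have e1 : ((t₂ : ℂ) - (t₁ : ℂ)) = ((t₂ - t₁ : ℝ) : ℂ) := by push_cast; ring
    rw [e1, Complex.norm_real, Real.norm_eq_abs, abs_of_pos hΔpos]
    calc (t₂ - t₁) * ‖u t₁‖ ≤ ((b - a) ^ (1 - α) * (t₂ - t₁) ^ α) * holNorm a b n α x := by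
          exact mul_le_mul hsplit (norm_DD_le_holNorm hα0 hx (le_refl n) h₁ hab)
            (norm_nonneg _) (mul_nonneg (Real.rpow_nonneg (by linarith) _) hΔα)
      _ = (b - a) ^ (1 - α) * (t₂ - t₁) ^ α * holNorm a b n α x := by ring
  have T3 : ‖(n : ℂ) * (v t₂ - v t₁)‖ ≤
      (n : ℝ) * (b - a) ^ (1 - α) * (t₂ - t₁) ^ α * holNorm a b n α x := by
    rw [norm_mul, Complex.norm_natCast]
    cases n with
    | zero => simp
    | succ k =>
      have hlip : ‖v t₂ - v t₁‖ ≤ holNorm a b (k+1) α x * |t₂ - t₁| := by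
        apply DD_lipschitz hab (Nat.lt_succ_self k) hx.1 _ h₁ h₂
        intro w hw
        have : k - 1 + 1 = k + 1 ∨ k + 1 = k + 1 := Or.inr rfl
        exact norm_DD_le_holNorm hα0 hx (le_refl (k+1)) hw hab
      have hv2 : ‖v t₂ - v t₁‖ ≤ holNorm a b (k+1) α x * ((b - a) ^ (1 - α) * (t₂ - t₁) ^ α) := by
        rw [abs_of_pos hΔpos] at hlip
        exact le_trans hlip (mul_le_mul_of_nonneg_left hsplit (holNorm_nonneg a b (k+1) hα0 x))
      calc ((k+1 : ℕ) : ℝ) * ‖v t₂ - v t₁‖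
          ≤ ((k+1 : ℕ) : ℝ) * (holNorm a b (k+1) α x * ((b - a) ^ (1 - α) * (t₂ - t₁) ^ α)) :=
            mul_le_mul_of_nonneg_left hv2 (by positivity)
        _ = ((k+1 : ℕ) : ℝ) * (b - a) ^ (1 - α) * (t₂ - t₁) ^ α * holNorm a b (k+1) α x := by
            ring
  calc ‖(t₂ : ℂ) * (u t₂ - u t₁) + ((t₂ : ℂ) - (t₁ : ℂ)) * u t₁ + (n : ℂ) * (v t₂ - v t₁)‖
      ≤ ‖(t₂ : ℂ) * (u t₂ - u t₁) + ((t₂ : ℂ) - (t₁ : ℂ)) * u t₁‖ +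
        ‖(n : ℂ) * (v t₂ - v t₁)‖ := norm_add_le _ _
    _ ≤ (‖(t₂ : ℂ) * (u t₂ - u t₁)‖ + ‖((t₂ : ℂ) - (t₁ : ℂ)) * u t₁‖) +
        ‖(n : ℂ) * (v t₂ - v t₁)‖ := by
        exact add_le_add_left (norm_add_le _ _) _
    _ ≤ ((|a| + |b|) * (holNorm a b n α x * (t₂ - t₁) ^ α) +
          (b - a) ^ (1 - α) * (t₂ - t₁) ^ α * holNorm a b n α x) +
        (n : ℝ) * (b - a) ^ (1 - α) * (t₂ - t₁) ^ α * holNorm a b n α x :=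
        add_le_add (add_le_add T1 T2) T3
    _ = ((|a| + |b|) + ((n : ℝ) + 1) * (b - a) ^ (1 - α)) * holNorm a b n α x *
        (t₂ - t₁) ^ α := by ring

end CondIAux


namespace CondIAux

variable {a b : ℝ} {n : ℕ} {α : ℝ}

/-- Constant controlling multiplication by `t` in the Hölder norm. -/
def K (a b : ℝ) (n : ℕ) (α : ℝ) : ℝ :=
  ((n : ℝ) + 1) * ((|a| + |b|) + (n : ℝ)) + (|a| + |b|) + ((n : ℝ) + 1) * (b - a) ^ (1 - α)

lemma K_nonneg (hab : a < b) : 0 ≤ K a b n α := by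
  unfold K
  have h1 : (0:ℝ) ≤ (b - a) ^ (1 - α) := Real.rpow_nonneg (by linarith) _
  positivity

lemma holMem_mul_id (hab : a < b) (hα0 : 0 < α) (hα1 : α ≤ 1) {x : ℝ → ℂ}
    (hx : HolMem a b n α x) : HolMem a b n α (fun s : ℝ => (s : ℂ) * x s) := by
  refine ⟨?_, _, holder_mul_id hab hα0 hα1 hx⟩
  exact (Complex.ofRealCLM.contDiff.contDiffOn).mul hx.1

lemma holNorm_mul_id_le (hab : a < b) (hα0 : 0 < α) (hα1 : α ≤ 1) {x : ℝ → ℂ}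
    (hx : HolMem a b n α x) :
    holNorm a b n α (fun s : ℝ => (s : ℂ) * x s) ≤ K a b n α * holNorm a b n α x := by
  have hud := uniqueDiffOn_Icc hab
  have hol := holNorm_nonneg a b n hα0 x
  rw [holNorm_eq (x := fun s : ℝ => (s : ℂ) * x s)]
  have hS : ∀ j ≤ n, SS a b j (fun s : ℝ => (s : ℂ) * x s) ≤
      ((|a| + |b|) + (n : ℝ)) * holNorm a b n α x := by
    intro j hj
    apply SS_le (le_of_lt hab)
    intro t ht
    rw [DD_mul_id hab hx.1 hj t ht]
    have hb1 : ‖(t : ℂ) * iteratedDerivWithin j x (Set.Icc a b) t‖ ≤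
        (|a| + |b|) * holNorm a b n α x := by
      rw [norm_mul, Complex.norm_real, Real.norm_eq_abs]
      exact mul_le_mul (abs_le_M ht) (norm_DD_le_holNorm hα0 hx hj ht hab)
        (norm_nonneg _) (le_trans (abs_nonneg t) (abs_le_M ht))
    have hb2 : ‖(j : ℂ) * iteratedDerivWithin (j - 1) x (Set.Icc a b) t‖ ≤
        (n : ℝ) * holNorm a b n α x := by
      rw [norm_mul, Complex.norm_natCast]
      exact mul_le_mul (by exact_mod_cast hj)
        (norm_DD_le_holNorm hα0 hx (le_trans (Nat.sub_le j 1) hj) ht hab)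
        (norm_nonneg _) (Nat.cast_nonneg n)
    calc ‖(t : ℂ) * iteratedDerivWithin j x (Set.Icc a b) t +
          (j : ℂ) * iteratedDerivWithin (j - 1) x (Set.Icc a b) t‖
        ≤ ‖(t : ℂ) * iteratedDerivWithin j x (Set.Icc a b) t‖ +
          ‖(j : ℂ) * iteratedDerivWithin (j - 1) x (Set.Icc a b) t‖ := norm_add_le _ _
      _ ≤ (|a| + |b|) * holNorm a b n α x + (n : ℝ) * holNorm a b n α x := add_le_add hb1 hb2
      _ = ((|a| + |b|) + (n : ℝ)) * holNorm a b n α x := by ring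
  have hH : holSemiNorm a b n α (fun s : ℝ => (s : ℂ) * x s) ≤
      ((|a| + |b|) + ((n : ℝ) + 1) * (b - a) ^ (1 - α)) * holNorm a b n α x :=
    holSemiNorm_le hab hα0 (holder_mul_id hab hα0 hα1 hx)
  have hsum : ∑ j ∈ Finset.range (n + 1), SS a b j (fun s : ℝ => (s : ℂ) * x s) ≤
      ((n : ℝ) + 1) * (((|a| + |b|) + (n : ℝ)) * holNorm a b n α x) := by
    calc ∑ j ∈ Finset.range (n + 1), SS a b j (fun s : ℝ => (s : ℂ) * x s)
        ≤ ∑ _j ∈ Finset.range (n + 1), ((|a| + |b|) + (n : ℝ)) * holNorm a b n α x :=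
          Finset.sum_le_sum fun j hj => hS j (Nat.lt_succ_iff.mp (Finset.mem_range.mp hj))
      _ = ((n : ℝ) + 1) * (((|a| + |b|) + (n : ℝ)) * holNorm a b n α x) := by
          rw [Finset.sum_const, Finset.card_range]
          push_cast
          ring
  unfold K
  nlinarith [hsum, hH]

lemma holMem_pow_mul (hab : a < b) (hα0 : 0 < α) (hα1 : α ≤ 1) {x : ℝ → ℂ}
    (hx : HolMem a b n α x) (q : ℕ) :
    HolMem a b n α (fun t : ℝ => (t : ℂ) ^ q * x t) ∧
      holNorm a b n α (fun t : ℝ => (t : ℂ) ^ q * x t) ≤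
        K a b n α ^ q * holNorm a b n α x := by
  induction q with
  | zero =>
    have he : (fun t : ℝ => (t : ℂ) ^ 0 * x t) = x := by funext t; simp
    rw [he]
    exact ⟨hx, by simp⟩
  | succ q IH =>
    have he : (fun t : ℝ => (t : ℂ) ^ (q + 1) * x t) =
        fun t : ℝ => (t : ℂ) * ((t : ℂ) ^ q * x t) := by funext t; ring
    rw [he]
    refine ⟨holMem_mul_id hab hα0 hα1 IH.1, ?_⟩
    calc holNorm a b n α (fun t : ℝ => (t : ℂ) * ((t : ℂ) ^ q * x t))
        ≤ K a b n α * holNorm a b n α (fun t : ℝ => (t : ℂ) ^ q * x t) :=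
          holNorm_mul_id_le hab hα0 hα1 IH.1
      _ ≤ K a b n α * (K a b n α ^ q * holNorm a b n α x) :=
          mul_le_mul_of_nonneg_left IH.2 (K_nonneg hab)
      _ = K a b n α ^ (q + 1) * holNorm a b n α x := by ring

lemma holMem_of_contDiff (hab : a < b) (hα0 : 0 < α) (hα1 : α ≤ 1) {x : ℝ → ℂ}
    (hx : ContDiff ℝ ⊤ x) : HolMem a b n α x := by
  have hud := uniqueDiffOn_Icc hab
  have hcd : ContDiffOn ℝ (n + 1 : ℕ) x (Set.Icc a b) :=
    (hx.of_le le_top).contDiffOn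
  obtain ⟨C, hC⟩ := isCompact_Icc.exists_bound_of_continuousOn
    (hcd.continuousOn_iteratedDerivWithin (le_refl _) hud)
  refine ⟨hcd.of_le (by exact_mod_cast Nat.le_succ n), C * (b - a) ^ (1 - α), ?_⟩
  intro t₁ h₁ t₂ h₂ hlt
  have hC0 : 0 ≤ C := le_trans (norm_nonneg _) (hC a ⟨le_refl a, hab.le⟩)
  have hlip := DD_lipschitz hab (Nat.lt_succ_self n) hcd hC h₁ h₂
  rw [abs_of_pos (by linarith : (0:ℝ) < t₂ - t₁)] at hlip
  calc ‖iteratedDerivWithin n x (Set.Icc a b) t₂ - iteratedDerivWithin n x (Set.Icc a b) t₁‖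
      ≤ C * (t₂ - t₁) := hlip
    _ ≤ C * ((b - a) ^ (1 - α) * (t₂ - t₁) ^ α) :=
        mul_le_mul_of_nonneg_left (rpow_split hab hα0 hα1 h₁ h₂ hlt) hC0
    _ = C * (b - a) ^ (1 - α) * (t₂ - t₁) ^ α := by ring

lemma contDiff_phi (p : ℕ) : ContDiff ℝ ⊤ (fun t : ℝ => (t : ℂ) ^ p) :=
  Complex.ofRealCLM.contDiff.pow p

lemma DD_phi (hab : a < b) (p j : ℕ) :
    ∀ t ∈ Set.Icc a b, iteratedDerivWithin j (fun s : ℝ => (s : ℂ) ^ p) (Set.Icc a b) t =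
      (p.descFactorial j : ℂ) * (t : ℂ) ^ (p - j) := by
  induction j with
  | zero => intro t ht; simp
  | succ j IH =>
    intro t ht
    have hud := uniqueDiffOn_Icc hab
    rw [iteratedDerivWithin_succ,
      derivWithin_congr (fun u hu => IH u hu) (IH t ht)]
    have hd : HasDerivWithinAt (fun u : ℝ => (p.descFactorial j : ℂ) * (u : ℂ) ^ (p - j))
        ((p.descFactorial j : ℂ) * (((p - j : ℕ) : ℂ) * (t : ℂ) ^ (p - j - 1)))
        (Set.Icc a b) t := by
      have h1 : HasDerivAt (fun z : ℂ => z ^ (p - j))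
          (((p - j : ℕ) : ℂ) * (t : ℂ) ^ (p - j - 1)) (t : ℂ) := hasDerivAt_pow _ _
      exact ((h1.comp_ofReal).const_mul _).hasDerivWithinAt
    rw [hd.derivWithin (hud.uniqueDiffWithinAt ht), Nat.descFactorial_succ, Nat.sub_sub,
      Nat.cast_mul]
    ring

end CondIAux


namespace CondIAux

variable {a b : ℝ} {n : ℕ} {α : ℝ}

lemma entry_le_mHolNorm (hα0 : 0 < α) {k l : ℕ} (X : ℝ → Matrix (Fin k) (Fin l) ℂ)
    (i : Fin k) (j : Fin l) :
    holNorm a b n α (fun t => X t i j) ≤ mHolNorm a b n α X := by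
  unfold mHolNorm
  calc holNorm a b n α (fun t => X t i j)
      ≤ ∑ j' : Fin l, holNorm a b n α (fun t => X t i j') :=
        Finset.single_le_sum (f := fun j' => holNorm a b n α (fun t => X t i j'))
          (fun j' _ => holNorm_nonneg a b n hα0 _) (Finset.mem_univ j)
    _ ≤ ∑ i' : Fin k, ∑ j' : Fin l, holNorm a b n α (fun t => X t i' j') :=
        Finset.single_le_sum (f := fun i' => ∑ j' : Fin l, holNorm a b n α (fun t => X t i' j'))
          (fun i' _ => Finset.sum_nonneg (fun j' _ => holNorm_nonneg a b n hα0 _))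
          (Finset.mem_univ i)

end CondIAux


set_option maxHeartbeats 2000000 in
/-- If L(ε)Z converges to L(0)Z in the matrix Hölder space for every matrix-valued
function Z of class C^{n+r,α}, then Limit Condition (I) holds. -/
theorem matrix_strong_convergence_implies_condI
    (a b : ℝ) (hab : a < b) (n : ℕ) (α : ℝ) (hα0 : 0 < α) (hα1 : α ≤ 1)
    (m r : ℕ) (hm : 1 ≤ m) (hr : 2 ≤ r) (ε₀ : ℝ) (hε₀ : 0 < ε₀)
    (A : ℝ → Fin r → ℝ → Matrix (Fin m) (Fin m) ℂ)
    (hA : ∀ ε ∈ Set.Ico (0 : ℝ) ε₀, ∀ j, mHolMem a b n α (A ε j))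
    (h : ∀ Z : ℝ → Matrix (Fin m) (Fin m) ℂ, mHolMem a b (n + r) α Z →
      Tendsto
        (fun ε => mHolNorm a b n α (fun t => LopM a b r (A ε) Z t - LopM a b r (A 0) Z t))
        (nhdsWithin 0 (Set.Ioi 0)) (nhds 0)) :
    CondI a b n α r m A := by
  classical
  open CondIAux in
  have hud := uniqueDiffOn_Icc hab
  have hA0 : ∀ j, mHolMem a b n α (A 0 j) := hA 0 ⟨le_refl 0, hε₀⟩
  have hEmem : ∀ ε ∈ Set.Ioo (0:ℝ) ε₀, ∀ (j' : Fin r) (i k : Fin m),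
      HolMem a b n α (fun t => (A ε j' t - A 0 j' t) i k) := by
    intro ε hε j' i k
    exact CondIAux.holMem_sub hab (hA ε ⟨hε.1.le, hε.2⟩ j' i k) (hA0 j' i k)
  have key : ∀ p : ℕ, ∀ hp : p < r, ∀ i k : Fin m,
      Tendsto (fun ε => holNorm a b n α (fun t => (A ε ⟨p, hp⟩ t - A 0 ⟨p, hp⟩ t) i k))
        (nhdsWithin 0 (Set.Ioi 0)) (nhds 0) := by
    intro p
    induction p using Nat.strong_induction_on with
    | _ p IH =>
    intro hp i k
    -- the test matrix function Z(t) = t^p • 1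
    set Z : ℝ → Matrix (Fin m) (Fin m) ℂ :=
      fun t => ((t : ℂ) ^ p) • (1 : Matrix (Fin m) (Fin m) ℂ) with hZdef
    have hZmem : mHolMem a b (n + r) α Z := by
      intro i' k'
      exact CondIAux.holMem_of_contDiff hab hα0 hα1
        ((CondIAux.contDiff_phi p).mul contDiff_const)
    -- derivatives of Z
    have hDZ : ∀ (q : ℕ), ∀ t ∈ Set.Icc a b,
        mDeriv a b q Z t =
          ((p.descFactorial q : ℂ) * (t : ℂ) ^ (p - q)) • (1 : Matrix (Fin m) (Fin m) ℂ) := by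
      intro q t ht
      funext i' k'
      show iteratedDerivWithin q (fun s => Z s i' k') (Set.Icc a b) t = _
      have he : (fun s => Z s i' k') =
          fun s : ℝ => (1 : Matrix (Fin m) (Fin m) ℂ) i' k' * (s : ℂ) ^ p := by
        funext s
        show (s : ℂ) ^ p * (1 : Matrix (Fin m) (Fin m) ℂ) i' k' = _
        ring
      have h2 : iteratedDerivWithin q
          (fun s : ℝ => (1 : Matrix (Fin m) (Fin m) ℂ) i' k' * (s : ℂ) ^ p) (Set.Icc a b) t =
          (1 : Matrix (Fin m) (Fin m) ℂ) i' k' *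
            iteratedDerivWithin q (fun s : ℝ => (s : ℂ) ^ p) (Set.Icc a b) t :=
        iteratedDerivWithin_const_smul ht hud ((1 : Matrix (Fin m) (Fin m) ℂ) i' k')
          (((CondIAux.contDiff_phi p).of_le le_top).contDiffOn t ht)
      rw [he, h2, CondIAux.DD_phi hab p q t ht]
      show _ = ((p.descFactorial q : ℂ) * (t : ℂ) ^ (p - q)) * (1 : Matrix (Fin m) (Fin m) ℂ) i' k'
      ring
    -- the LopM difference, computed on Icc
    have hLopEq : ∀ ε : ℝ, ∀ t ∈ Set.Icc a b,
        LopM a b r (A ε) Z t - LopM a b r (A 0) Z t =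
          ∑ j' : Fin r, ((p.descFactorial (j' : ℕ) : ℂ) * (t : ℂ) ^ (p - (j' : ℕ))) •
            (A ε j' t - A 0 j' t) := by
      intro ε t ht
      show (mDeriv a b r Z t + ∑ j' : Fin r, A ε j' t * mDeriv a b (j' : ℕ) Z t) -
          (mDeriv a b r Z t + ∑ j' : Fin r, A 0 j' t * mDeriv a b (j' : ℕ) Z t) = _
      rw [add_sub_add_left_eq_sub, ← Finset.sum_sub_distrib]
      apply Finset.sum_congr rfl
      intro j' _
      rw [hDZ (j' : ℕ) t ht, Matrix.mul_smul, Matrix.mul_smul, Matrix.mul_one, Matrix.mul_one,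
        ← smul_sub]
    -- scalar entry quantities
    set E : ℝ → Fin r → ℝ → ℂ := fun ε j' t => (A ε j' t - A 0 j' t) i k with hE
    set term : ℝ → Fin r → ℝ → ℂ := fun ε j' t =>
      (p.descFactorial (j' : ℕ) : ℂ) * ((t : ℂ) ^ (p - (j' : ℕ)) * E ε j' t) with hterm
    set d : ℝ → ℝ → ℂ := fun ε t => ∑ j' : Fin r, term ε j' t with hd
    set rest : ℝ → ℝ → ℂ := fun ε t =>
      ∑ j' ∈ Finset.univ.erase (⟨p, hp⟩ : Fin r), term ε j' t with hrest
    have hEntryEq : ∀ ε : ℝ, Set.EqOn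
        (fun t => (LopM a b r (A ε) Z t - LopM a b r (A 0) Z t) i k) (d ε) (Set.Icc a b) := by
      intro ε t ht
      show (LopM a b r (A ε) Z t - LopM a b r (A 0) Z t) i k = d ε t
      rw [hLopEq ε t ht, Matrix.sum_apply]
      apply Finset.sum_congr rfl
      intro j' _
      show ((p.descFactorial (j' : ℕ) : ℂ) * (t : ℂ) ^ (p - (j' : ℕ))) *
          (A ε j' t - A 0 j' t) i k = _
      show _ = (p.descFactorial (j' : ℕ) : ℂ) * ((t : ℂ) ^ (p - (j' : ℕ)) * E ε j' t)
      rw [hE]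
      ring
    -- the d part tends to 0
    have hdT : Tendsto (fun ε => holNorm a b n α (d ε)) (nhdsWithin 0 (Set.Ioi 0)) (nhds 0) := by
      apply squeeze_zero (fun ε => CondIAux.holNorm_nonneg a b n hα0 (d ε)) _ (h Z hZmem)
      intro ε
      have h1 : holNorm a b n α (d ε) =
          holNorm a b n α (fun t => (LopM a b r (A ε) Z t - LopM a b r (A 0) Z t) i k) :=
        (CondIAux.holNorm_congr hab (hEntryEq ε)).symm
      rw [h1]
      exact CondIAux.entry_le_mHolNorm hα0 _ i k
    -- bound function
    set Bnd : ℝ → ℝ := fun ε => ‖((p.factorial : ℂ))⁻¹‖ *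
      (holNorm a b n α (d ε) + ∑ j' ∈ Finset.univ.erase (⟨p, hp⟩ : Fin r),
        ‖((p.descFactorial (j' : ℕ) : ℂ))‖ *
          (CondIAux.K a b n α ^ (p - (j' : ℕ)) * holNorm a b n α (E ε j'))) with hBnd
    have hBndT : Tendsto Bnd (nhdsWithin 0 (Set.Ioi 0)) (nhds 0) := by
      have hsumT : Tendsto (fun ε => ∑ j' ∈ Finset.univ.erase (⟨p, hp⟩ : Fin r),
          ‖((p.descFactorial (j' : ℕ) : ℂ))‖ *
            (CondIAux.K a b n α ^ (p - (j' : ℕ)) * holNorm a b n α (E ε j')))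
          (nhdsWithin 0 (Set.Ioi 0)) (nhds 0) := by
        have : ∀ j' ∈ Finset.univ.erase (⟨p, hp⟩ : Fin r),
            Tendsto (fun ε => ‖((p.descFactorial (j' : ℕ) : ℂ))‖ *
              (CondIAux.K a b n α ^ (p - (j' : ℕ)) * holNorm a b n α (E ε j')))
              (nhdsWithin 0 (Set.Ioi 0)) (nhds 0) := by
          intro j' hj'
          have hne : (j' : ℕ) ≠ p := by
            intro hcon
            apply Finset.ne_of_mem_erase hj'
            exact Fin.ext hcon
          rcases lt_or_gt_of_ne hne with hlt | hgt
          · have hT : Tendsto (fun ε => holNorm a b n α (E ε j'))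
                (nhdsWithin 0 (Set.Ioi 0)) (nhds 0) := by
              have := IH (j' : ℕ) hlt j'.isLt i k
              exact this
            have h4 := hT.const_mul (‖((p.descFactorial (j' : ℕ) : ℂ))‖ *
              CondIAux.K a b n α ^ (p - (j' : ℕ)))
            simpa only [mul_zero, mul_assoc] using h4
          · have hz : (p.descFactorial (j' : ℕ) : ℂ) = 0 := by
              norm_cast
              exact Nat.descFactorial_eq_zero_iff_lt.mpr hgt
            have he : (fun ε => ‖((p.descFactorial (j' : ℕ) : ℂ))‖ *
                (CondIAux.K a b n α ^ (p - (j' : ℕ)) * holNorm a b n α (E ε j'))) =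
                fun _ => (0:ℝ) := by
              funext ε
              rw [hz]
              simp
            rw [he]
            exact tendsto_const_nhds
        have h3 := tendsto_finset_sum (Finset.univ.erase (⟨p, hp⟩ : Fin r)) this
        simp only [Finset.sum_const_zero] at h3
        exact h3
      have h2 := (hdT.add hsumT).const_mul ‖((p.factorial : ℂ))⁻¹‖
      rw [hBnd]
      simpa only [add_zero, mul_zero] using h2
    -- the eventual bound
    have hev : ∀ᶠ ε in nhdsWithin (0:ℝ) (Set.Ioi 0),
        holNorm a b n α (fun t => (A ε ⟨p, hp⟩ t - A 0 ⟨p, hp⟩ t) i k) ≤ Bnd ε := by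
      filter_upwards [Ioo_mem_nhdsGT_of_mem (Set.mem_Ico.mpr ⟨le_refl 0, hε₀⟩)] with ε hε
      have hmem_e : ∀ j', HolMem a b n α (E ε j') := fun j' => hEmem ε hε j' i k
      have hg := fun j' : Fin r =>
        CondIAux.holMem_pow_mul hab hα0 hα1 (hmem_e j') (p - (j' : ℕ))
      have hmem_term : ∀ j' : Fin r, HolMem a b n α (term ε j') := fun j' =>
        CondIAux.holMem_smul hab _ (hg j').1
      have hterm_le : ∀ j' : Fin r, holNorm a b n α (term ε j') ≤
          ‖((p.descFactorial (j' : ℕ) : ℂ))‖ *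
            (CondIAux.K a b n α ^ (p - (j' : ℕ)) * holNorm a b n α (E ε j')) := fun j' =>
        le_trans (CondIAux.holNorm_smul_le hab hα0 _ (hg j').1)
          (mul_le_mul_of_nonneg_left (hg j').2 (norm_nonneg _))
      have hmem_rest : HolMem a b n α (rest ε) :=
        CondIAux.holMem_sum hab _ _ (fun j' _ => hmem_term j')
      have hmem_d : HolMem a b n α (d ε) :=
        CondIAux.holMem_sum hab _ _ (fun j' _ => hmem_term j')
      have hfact : ((p.factorial : ℂ)) ≠ 0 := by
        exact_mod_cast p.factorial_ne_zero
      have hsplitE : (fun t => (A ε ⟨p, hp⟩ t - A 0 ⟨p, hp⟩ t) i k) =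
          fun t => ((p.factorial : ℂ))⁻¹ * (d ε t - rest ε t) := by
        funext t
        have hds : d ε t = term ε ⟨p, hp⟩ t + rest ε t :=
          (Finset.add_sum_erase Finset.univ _ (Finset.mem_univ _)).symm
        have htp : term ε ⟨p, hp⟩ t = (p.factorial : ℂ) * E ε ⟨p, hp⟩ t := by
          show (p.descFactorial p : ℂ) * ((t : ℂ) ^ (p - p) * E ε ⟨p, hp⟩ t) = _
          rw [Nat.descFactorial_self, Nat.sub_self]
          ring
        show E ε ⟨p, hp⟩ t = _
        rw [hds, htp]
        field_simp
        ring
      rw [hsplitE, hBnd]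
      have hsub : HolMem a b n α (fun t => d ε t - rest ε t) :=
        CondIAux.holMem_sub hab hmem_d hmem_rest
      calc holNorm a b n α (fun t => ((p.factorial : ℂ))⁻¹ * (d ε t - rest ε t))
          ≤ ‖((p.factorial : ℂ))⁻¹‖ * holNorm a b n α (fun t => d ε t - rest ε t) :=
            CondIAux.holNorm_smul_le hab hα0 _ hsub
        _ ≤ ‖((p.factorial : ℂ))⁻¹‖ * (holNorm a b n α (d ε) + holNorm a b n α (rest ε)) :=
            mul_le_mul_of_nonneg_left
              (CondIAux.holNorm_sub_le hab hα0 hmem_d hmem_rest) (norm_nonneg _)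
        _ ≤ ‖((p.factorial : ℂ))⁻¹‖ * (holNorm a b n α (d ε) +
              ∑ j' ∈ Finset.univ.erase (⟨p, hp⟩ : Fin r),
                ‖((p.descFactorial (j' : ℕ) : ℂ))‖ *
                  (CondIAux.K a b n α ^ (p - (j' : ℕ)) * holNorm a b n α (E ε j'))) := by
            apply mul_le_mul_of_nonneg_left _ (norm_nonneg _)
            apply add_le_add_right
            calc holNorm a b n α (rest ε)
                ≤ ∑ j' ∈ Finset.univ.erase (⟨p, hp⟩ : Fin r), holNorm a b n α (term ε j') :=
                  CondIAux.holNorm_sum_le hab hα0 _ _ (fun j' _ => hmem_term j')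
              _ ≤ _ := Finset.sum_le_sum (fun j' _ => hterm_le j')
    exact squeeze_zero'
      (Filter.Eventually.of_forall (fun ε => CondIAux.holNorm_nonneg a b n hα0 _)) hev hBndT
  intro j0
  have hT : ∀ i ∈ (Finset.univ : Finset (Fin m)), Tendsto (fun ε => ∑ k : Fin m,
      holNorm a b n α (fun t => (A ε j0 t - A 0 j0 t) i k))
      (nhdsWithin 0 (Set.Ioi 0)) (nhds 0) := by
    intro i _
    have h1 : ∀ k ∈ (Finset.univ : Finset (Fin m)), Tendsto (fun ε =>
        holNorm a b n α (fun t => (A ε j0 t - A 0 j0 t) i k))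
        (nhdsWithin 0 (Set.Ioi 0)) (nhds 0) := fun k _ => key (j0 : ℕ) j0.isLt i k
    have h2 := tendsto_finset_sum Finset.univ h1
    simp only [Finset.sum_const_zero] at h2
    exact h2
  have h2 := tendsto_finset_sum Finset.univ hT
  simp only [Finset.sum_const_zero] at h2
  exact h2
end
end

section
/- Fix ε ∈ [0, ε₀) and let Y ∈ (C^{n+r,α})^{m×rm} be a matrix-valued function satisfying the homogeneous matrix differential system Y^{(r)}(t) + Σ_{j=1}^{r} A_{r−j}(t,ε) Y^{(r−j)}(t) = O_{m×rm} for a ≤ t ≤ b, together with the matrix boundary condition [B(ε)Y] = I_{rm}, where [B(ε)Y] denotes the rm×rm matrix whose k-th column is B(ε) applied to the k-th column of Y. Define X(t) ∈ ℂ^{rm×rm} as the block matrix whose i-th block row is Y^{(i−1)}(t) for i = 1,…,r. Then det X(t) ≠ 0 for every t ∈ [a,b]. -/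
open Set Filter Topology

noncomputable section

private lemma itd_zero_fun {N : ℕ} {S : Set ℝ} (hS : UniqueDiffOn ℝ S) {x : ℝ} (hx : x ∈ S) :
    iteratedDerivWithin N (fun _ : ℝ => (0 : ℂ)) S x = 0 := by
  induction N generalizing x with
  | zero => simp
  | succ N ih =>
    have h0 : Set.EqOn (iteratedDerivWithin N (fun _ : ℝ => (0:ℂ)) S) (fun _ => (0:ℂ)) S :=
      fun y hy => ih hy
    rw [iteratedDerivWithin_succ, derivWithin_congr h0 (ih hx)]
    simp

private lemma itd_sum {ι : Type*} (s : Finset ι) {N : ℕ} {S : Set ℝ} (hS : UniqueDiffOn ℝ S)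
    {x : ℝ} (hx : x ∈ S) (f : ι → ℝ → ℂ) (hf : ∀ k ∈ s, ContDiffOn ℝ N (f k) S) :
    iteratedDerivWithin N (fun t => ∑ k ∈ s, f k t) S x
      = ∑ k ∈ s, iteratedDerivWithin N (f k) S x := by
  classical
  induction s using Finset.induction_on with
  | empty => simpa using itd_zero_fun hS hx
  | insert c s h ih =>
    rw [show (fun t => ∑ k ∈ insert c s, f k t) = f c + (fun t => ∑ k ∈ s, f k t) by
      funext t; simp [Finset.sum_insert h]]
    rw [iteratedDerivWithin_add hx hS (hf c (Finset.mem_insert_self c s) x hx)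
      (ContDiffOn.sum (fun k hk => hf k (Finset.mem_insert_of_mem hk)) x hx),
      ih fun k hk => hf k (Finset.mem_insert_of_mem hk), Finset.sum_insert h]

private lemma itd_cmul {N : ℕ} {S : Set ℝ} (hS : UniqueDiffOn ℝ S) {x : ℝ} (hx : x ∈ S)
    (c : ℂ) (f : ℝ → ℂ) (hf : ContDiffOn ℝ N f S) :
    iteratedDerivWithin N (fun t => c * f t) S x = c * iteratedDerivWithin N f S x := by
  simpa [Pi.smul_apply, smul_eq_mul] using
    iteratedDerivWithin_const_smul (F := ℂ) hx hS c hf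

private lemma itd_comb {K : ℕ} {N : ℕ} {S : Set ℝ} (hS : UniqueDiffOn ℝ S) {x : ℝ} (hx : x ∈ S)
    (c : Fin K → ℂ) (f : Fin K → ℝ → ℂ) (hf : ∀ k, ContDiffOn ℝ N (f k) S) :
    iteratedDerivWithin N (fun t => ∑ k, c k * f k t) S x
      = ∑ k, c k * iteratedDerivWithin N (f k) S x := by
  rw [itd_sum Finset.univ hS hx (fun k t => c k * f k t)
    (fun k _ => (contDiffOn_const.mul (hf k)))]
  exact Finset.sum_congr rfl fun k _ => itd_cmul hS hx (c k) (f k) (hf k)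

/-- If the matrix-valued function Y solves the homogeneous matrix system with the
matrix boundary condition [B Y] = I, then the block matrix X(t), whose i-th block row
is the (i-1)-th derivative of Y, has nonzero determinant at every t in [a,b]. -/
theorem block_wronskian_nonsingular
    (a b : ℝ) (hab : a < b) (n : ℕ) (α : ℝ) (hα0 : 0 < α) (hα1 : α ≤ 1)
    (m r : ℕ) (hm : 1 ≤ m) (hr : 2 ≤ r)
    (A : Fin r → ℝ → Matrix (Fin m) (Fin m) ℂ)
    (hA : ∀ j, mHolMem a b n α (A j))
    (B : (ℝ → (Fin m → ℂ)) →ₗ[ℂ] (Fin (r * m) → ℂ))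
    (hB : ∃ K : ℝ, ∀ y : ℝ → (Fin m → ℂ),
      vHolMem a b (n + r) α y → ‖B y‖ ≤ K * vHolNorm a b (n + r) α y)
    (Y : ℝ → Matrix (Fin m) (Fin (r * m)) ℂ)
    (hY : mHolMem a b (n + r) α Y)
    (hYeq : ∀ t ∈ Set.Icc a b, LopM a b r A Y t = 0)
    (hYbc : (Matrix.of fun i k : Fin (r * m) => B (fun t => fun j => Y t j k) i) = 1) :
    ∀ t ∈ Set.Icc a b,
      (Matrix.of fun p q : Fin (r * m) =>
          mDeriv a b ((finProdFinEquiv.symm p).1 : ℕ) Y t (finProdFinEquiv.symm p).2 q).det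
        ≠ 0 := by
  classical
  intro t0 ht0
  by_contra hdet
  obtain ⟨d, hd0, hXd⟩ := Matrix.exists_mulVec_eq_zero_iff.mpr hdet
  set S : Set ℝ := Set.Icc a b with hSdef
  have hS : UniqueDiffOn ℝ S := uniqueDiffOn_Icc hab
  have haS : a ∈ S := Set.left_mem_Icc.mpr hab.le
  have hbS : b ∈ S := Set.right_mem_Icc.mpr hab.le
  -- the vector solution y = Y d, entrywise
  set g : Fin m → ℝ → ℂ := fun j t => ∑ k, d k * Y t j k with hgdef
  have hgc : ∀ j, ContDiffOn ℝ (n + r) (g j) S :=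
    fun j => ContDiffOn.sum fun k _ => contDiffOn_const.mul (hY j k).1
  have hgd : ∀ p : ℕ, p ≤ n + r → ∀ j, ∀ t ∈ S,
      iteratedDerivWithin p (g j) S t
        = ∑ k, d k * iteratedDerivWithin p (fun s => Y s j k) S t := by
    intro p hp j t ht
    exact itd_comb hS ht d (fun k s => Y s j k)
      (fun k => (hY j k).1.of_le (by exact_mod_cast hp))
  -- first-order system
  set z : ℝ → (Fin r → Fin m → ℂ) :=
    fun t i j => iteratedDerivWithin (i : ℕ) (g j) S t with hzdef
  set π : ℝ → ℝ := fun t => min (max t a) b with hπdef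
  have hπ : ∀ t ∈ S, π t = t := by
    intro t ht
    simp only [hπdef]
    rw [max_eq_left ht.1, min_eq_left ht.2]
  have hπS : ∀ t, π t ∈ S := by
    intro t
    constructor
    · exact le_min (le_max_right t a) hab.le
    · exact min_le_right _ _
  set v : ℝ → (Fin r → Fin m → ℂ) → (Fin r → Fin m → ℂ) :=
    fun t w i j => if h : (i : ℕ) + 1 < r then w ⟨(i : ℕ) + 1, h⟩ j
      else -(∑ l : Fin r, (A l (π t)).mulVec (w l)) j with hvdef
  have hv0 : ∀ t, v t 0 = 0 := by
    intro t; funext i j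
    by_cases h : (i : ℕ) + 1 < r <;> simp [hvdef, h, Matrix.mulVec_zero]
  -- initial condition: z t0 = 0
  have hzt0 : z t0 = 0 := by
    funext i j
    have hile : (i : ℕ) ≤ n + r := le_trans i.isLt.le (Nat.le_add_left r n)
    have h := congrFun hXd (finProdFinEquiv (i, j))
    simp only [Matrix.mulVec, dotProduct, Matrix.of_apply, Equiv.symm_apply_apply,
      Pi.zero_apply, mDeriv, ← hSdef] at h
    simp only [hzdef, Pi.zero_apply]
    rw [hgd (i : ℕ) hile j t0 ht0, ← h]
    exact Finset.sum_congr rfl fun q _ => mul_comm _ _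
  -- the ODE satisfied by g/z
  have hode : ∀ j : Fin m, ∀ t ∈ S,
      iteratedDerivWithin r (g j) S t
        = (-(∑ l : Fin r, (A l t).mulVec (z t l))) j := by
    intro j t ht
    have hrle : r ≤ n + r := Nat.le_add_left r n
    have hent : ∀ k, iteratedDerivWithin r (fun s => Y s j k) S t
        = -∑ l : Fin r, ∑ q, A l t j q * iteratedDerivWithin (l : ℕ) (fun s => Y s q k) S t := by
      intro k
      have h := congrFun (congrFun (hYeq t ht) j) k
      simp only [LopM, Matrix.add_apply, Matrix.sum_apply, Matrix.mul_apply,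
        Pi.zero_apply, Matrix.zero_apply, mDeriv, ← hSdef] at h
      linear_combination h
    have hrhs : (-(∑ l : Fin r, (A l t).mulVec (z t l))) j
        = -∑ l : Fin r, ∑ q, A l t j q *
            (∑ k, d k * iteratedDerivWithin (l : ℕ) (fun s => Y s q k) S t) := by
      simp only [Pi.neg_apply, Finset.sum_apply, Matrix.mulVec, dotProduct, hzdef]
      congr 1
      refine Finset.sum_congr rfl fun l _ => Finset.sum_congr rfl fun q _ => ?_
      rw [hgd (l : ℕ) (le_trans l.isLt.le hrle) q t ht]
    rw [hrhs, hgd r hrle j t ht]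
    calc (∑ k, d k * iteratedDerivWithin r (fun s => Y s j k) S t)
        = ∑ k, d k * -∑ l : Fin r, ∑ q, A l t j q *
            iteratedDerivWithin (l : ℕ) (fun s => Y s q k) S t :=
          Finset.sum_congr rfl fun k _ => by rw [hent k]
      _ = -∑ l : Fin r, ∑ q, A l t j q *
            (∑ k, d k * iteratedDerivWithin (l : ℕ) (fun s => Y s q k) S t) := by
          simp only [mul_neg, ← Finset.sum_neg_distrib, neg_inj, Finset.mul_sum]
          rw [Finset.sum_comm]
          refine Finset.sum_congr rfl fun l _ => ?_
          rw [Finset.sum_comm]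
          exact Finset.sum_congr rfl fun q _ => Finset.sum_congr rfl fun k _ => by ring
  -- uniform bound on the coefficients
  obtain ⟨C, hC0, hC⟩ : ∃ C : ℝ, 0 ≤ C ∧ ∀ t ∈ S, ∀ l : Fin r, ∀ p q : Fin m,
      ‖A l t p q‖ ≤ C := by
    have hFc : ContinuousOn
        (fun t => ∑ l : Fin r, ∑ p : Fin m, ∑ q : Fin m, ‖A l t p q‖) S := by
      refine continuousOn_finset_sum _ fun l _ => continuousOn_finset_sum _ fun p _ =>
        continuousOn_finset_sum _ fun q _ => ((hA l p q).1.continuousOn).norm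
    obtain ⟨C, hCb⟩ := (isCompact_Icc (a := a) (b := b)).exists_bound_of_continuousOn hFc
    refine ⟨C, le_trans (norm_nonneg _) (hCb a haS), ?_⟩
    intro t ht l p q
    have h1 : ‖A l t p q‖ ≤ ∑ q' : Fin m, ‖A l t p q'‖ :=
      Finset.single_le_sum (fun q' _ => norm_nonneg _) (Finset.mem_univ q)
    have h2 : (∑ q' : Fin m, ‖A l t p q'‖) ≤ ∑ p' : Fin m, ∑ q' : Fin m, ‖A l t p' q'‖ :=
      Finset.single_le_sum (f := fun p' => ∑ q' : Fin m, ‖A l t p' q'‖)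
        (fun p' _ => Finset.sum_nonneg fun q' _ => norm_nonneg _) (Finset.mem_univ p)
    have h3 : (∑ p' : Fin m, ∑ q' : Fin m, ‖A l t p' q'‖)
        ≤ ∑ l' : Fin r, ∑ p' : Fin m, ∑ q' : Fin m, ‖A l' t p' q'‖ :=
      Finset.single_le_sum (f := fun l' => ∑ p' : Fin m, ∑ q' : Fin m, ‖A l' t p' q'‖)
        (fun l' _ => Finset.sum_nonneg fun p' _ => Finset.sum_nonneg fun q' _ => norm_nonneg _)
        (Finset.mem_univ l)
    have h4 : (∑ l' : Fin r, ∑ p' : Fin m, ∑ q' : Fin m, ‖A l' t p' q'‖) ≤ C :=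
      le_trans (le_abs_self _) (by simpa [Real.norm_eq_abs] using hCb t ht)
    linarith
  set K : ℝ := 1 + (r * m : ℝ) * C with hKdef
  have hK1 : (1 : ℝ) ≤ K := by
    have : 0 ≤ (r * m : ℝ) * C := by positivity
    simp only [hKdef]; linarith
  have hlip : ∀ t : ℝ, LipschitzOnWith (Real.toNNReal K) (v t) Set.univ := by
    intro t
    apply LipschitzWith.lipschitzOnWith
    apply LipschitzWith.of_dist_le_mul
    intro w1 w2
    rw [dist_eq_norm, dist_eq_norm, Real.coe_toNNReal K (by linarith : (0:ℝ) ≤ K)]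
    have hnn : (0 : ℝ) ≤ K * ‖w1 - w2‖ := by
      have := norm_nonneg (w1 - w2); nlinarith
    refine (pi_norm_le_iff_of_nonneg hnn).2 fun i => ?_
    refine (pi_norm_le_iff_of_nonneg hnn).2 fun j => ?_
    have hw : ∀ (l : Fin r) (q : Fin m), ‖w1 l q - w2 l q‖ ≤ ‖w1 - w2‖ := by
      intro l q
      calc ‖w1 l q - w2 l q‖ = ‖(w1 - w2) l q‖ := by simp
        _ ≤ ‖(w1 - w2) l‖ := norm_le_pi_norm _ q
        _ ≤ ‖w1 - w2‖ := norm_le_pi_norm _ l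
    simp only [Pi.sub_apply, hvdef]
    by_cases h : (i : ℕ) + 1 < r
    · simp only [dif_pos h]
      calc ‖w1 ⟨(i : ℕ) + 1, h⟩ j - w2 ⟨(i : ℕ) + 1, h⟩ j‖ ≤ ‖w1 - w2‖ := hw _ _
        _ ≤ K * ‖w1 - w2‖ := le_mul_of_one_le_left (norm_nonneg _) hK1
    · simp only [dif_neg h]
      have heq : (-(∑ l : Fin r, (A l (π t)).mulVec (w1 l)) j)
            - (-(∑ l : Fin r, (A l (π t)).mulVec (w2 l)) j)
          = ∑ l : Fin r, ∑ q, A l (π t) j q * (w2 l q - w1 l q) := by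
        simp only [Pi.neg_apply, Finset.sum_apply, Matrix.mulVec, dotProduct,
          neg_sub_neg, ← Finset.sum_sub_distrib, mul_sub]
      rw [heq]
      calc ‖∑ l : Fin r, ∑ q, A l (π t) j q * (w2 l q - w1 l q)‖
          ≤ ∑ l : Fin r, ‖∑ q, A l (π t) j q * (w2 l q - w1 l q)‖ := norm_sum_le _ _
        _ ≤ ∑ l : Fin r, ∑ q : Fin m, ‖A l (π t) j q * (w2 l q - w1 l q)‖ :=
            Finset.sum_le_sum fun l _ => norm_sum_le _ _
        _ ≤ ∑ _l : Fin r, ∑ _q : Fin m, C * ‖w1 - w2‖ := by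
            refine Finset.sum_le_sum fun l _ => Finset.sum_le_sum fun q _ => ?_
            rw [norm_mul]
            have h1 := hC (π t) (hπS t) l j q
            have h2 : ‖w2 l q - w1 l q‖ ≤ ‖w1 - w2‖ := by
              rw [norm_sub_rev]; exact hw l q
            exact mul_le_mul h1 h2 (norm_nonneg _) hC0
        _ = (r * m : ℝ) * C * ‖w1 - w2‖ := by
            simp [Finset.sum_const, Finset.card_univ, nsmul_eq_mul]; ring
        _ ≤ K * ‖w1 - w2‖ := by
            have := norm_nonneg (w1 - w2)
            have h0 : (0 : ℝ) ≤ (r * m : ℝ) * C := by positivity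
            nlinarith
  -- z is a solution of the first-order system
  have hzcont : ContinuousOn z S := by
    refine continuousOn_pi.2 fun i => continuousOn_pi.2 fun j => ?_
    exact (hgc j).continuousOn_iteratedDerivWithin
      (by exact_mod_cast (le_trans (le_of_lt i.isLt) (Nat.le_add_left r n))) hS
  have hzd : ∀ t ∈ S, HasDerivWithinAt z (v t (z t)) S t := by
    intro t ht
    rw [hasDerivWithinAt_pi]
    intro i
    rw [hasDerivWithinAt_pi]
    intro j
    have hdiff := ((hgc j).differentiableOn_iteratedDerivWithin
      (show ((i : ℕ) : WithTop ℕ∞) < ((n + r : ℕ) : WithTop ℕ∞) by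
        exact_mod_cast lt_of_lt_of_le i.isLt (Nat.le_add_left r n)) hS) t ht
    have h1 := hdiff.hasDerivWithinAt
    rw [← iteratedDerivWithin_succ] at h1
    have hval : v t (z t) i j = iteratedDerivWithin ((i : ℕ) + 1) (g j) S t := by
      by_cases h : (i : ℕ) + 1 < r
      · simp only [hvdef, dif_pos h, hzdef]
      · have hieq : (i : ℕ) + 1 = r := by have := i.isLt; omega
        simp only [hvdef, dif_neg h]
        rw [hπ t ht, hieq]
        exact (hode j t ht).symm
    rw [hval]
    exact h1
  -- uniqueness: z vanishes on S
  have hzero : ∀ t ∈ S, z t = 0 := by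
    have hzleft : Set.EqOn z (fun _ => (0 : Fin r → Fin m → ℂ)) (Set.Icc a t0) := by
      refine ODE_solution_unique_of_mem_Icc_left (v := v) (s := fun _ => Set.univ)
        (K := Real.toNNReal K) (fun t _ => hlip t)
        (hzcont.mono (Set.Icc_subset_Icc_right ht0.2))
        ?_ (fun _ _ => Set.mem_univ _)
        continuousOn_const ?_ (fun _ _ => Set.mem_univ _) hzt0
      · intro t ht
        have htS : t ∈ S := ⟨ht.1.le, le_trans ht.2 ht0.2⟩
        refine (hzd t htS).mono_of_mem_nhdsWithin ?_
        refine Filter.mem_of_superset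
          (inter_mem_nhdsWithin (Set.Iic t) (Ioi_mem_nhds ht.1)) ?_
        exact fun x hx => ⟨hx.2.le, le_trans hx.1 htS.2⟩
      · intro t ht
        simpa [hv0 t] using
          (hasDerivWithinAt_const t (Set.Iic t) (0 : Fin r → Fin m → ℂ))
    have hzright : Set.EqOn z (fun _ => (0 : Fin r → Fin m → ℂ)) (Set.Icc t0 b) := by
      refine ODE_solution_unique_of_mem_Icc_right (v := v) (s := fun _ => Set.univ)
        (K := Real.toNNReal K) (fun t _ => hlip t)
        (hzcont.mono (Set.Icc_subset_Icc_left ht0.1))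
        ?_ (fun _ _ => Set.mem_univ _)
        continuousOn_const ?_ (fun _ _ => Set.mem_univ _) hzt0
      · intro t ht
        have htS : t ∈ S := ⟨le_trans ht0.1 ht.1, ht.2.le⟩
        refine (hzd t htS).mono_of_mem_nhdsWithin ?_
        refine Filter.mem_of_superset
          (inter_mem_nhdsWithin (Set.Ici t) (Iio_mem_nhds ht.2)) ?_
        exact fun x hx => ⟨le_trans htS.1 hx.1, hx.2.le⟩
      · intro t ht
        simpa [hv0 t] using
          (hasDerivWithinAt_const t (Set.Ici t) (0 : Fin r → Fin m → ℂ))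
    intro t ht
    rcases le_total t t0 with h | h
    · exact hzleft ⟨ht.1, h⟩
    · exact hzright ⟨h, ht.2⟩
  -- the vector-valued function y
  set yy : ℝ → Fin m → ℂ := fun t j => g j t with hyydef
  have hyzero : ∀ t ∈ S, ∀ j, yy t j = 0 := by
    intro t ht j
    have h0r : 0 < r := by omega
    have := congrFun (congrFun (hzero t ht) ⟨0, h0r⟩) j
    simpa [hzdef, iteratedDerivWithin_zero] using this
  have hitz : ∀ (p : ℕ) (j : Fin m), ∀ t ∈ S,
      iteratedDerivWithin p (fun s => yy s j) S t = 0 := by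
    intro p j t ht
    have heq : Set.EqOn (fun s => yy s j) (fun _ => (0 : ℂ)) S := fun s hs => hyzero s hs j
    rw [iteratedDerivWithin_congr heq ht]
    exact itd_zero_fun hS ht
  have hmem : vHolMem a b (n + r) α yy := by
    intro j
    refine ⟨hgc j, 0, fun t1 h1 t2 h2 hlt => ?_⟩
    rw [hitz _ j t2 h2, hitz _ j t1 h1]
    simp
  have hnorm0 : vHolNorm a b (n + r) α yy = 0 := by
    unfold vHolNorm
    refine Finset.sum_eq_zero fun j _ => ?_
    unfold holNorm holSemiNorm
    have hset1 : ∀ p : ℕ,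
        {s : ℝ | ∃ t ∈ Set.Icc a b,
          s = ‖iteratedDerivWithin p (fun t => yy t j) (Set.Icc a b) t‖} = {(0 : ℝ)} := by
      intro p
      ext s
      simp only [Set.mem_setOf_eq, Set.mem_singleton_iff]
      constructor
      · rintro ⟨t, ht, rfl⟩
        rw [show Set.Icc a b = S from hSdef.symm, hitz p j t (hSdef ▸ ht)]
        simp
      · rintro rfl
        refine ⟨a, hSdef ▸ haS, ?_⟩
        rw [show Set.Icc a b = S from hSdef.symm, hitz p j a haS]
        simp
    have hset2 : {s : ℝ | ∃ t₁ ∈ Set.Icc a b, ∃ t₂ ∈ Set.Icc a b, t₁ < t₂ ∧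
        s = ‖iteratedDerivWithin (n + r) (fun t => yy t j) (Set.Icc a b) t₂ -
            iteratedDerivWithin (n + r) (fun t => yy t j) (Set.Icc a b) t₁‖ /
            (t₂ - t₁) ^ α} = {(0 : ℝ)} := by
      ext s
      simp only [Set.mem_setOf_eq, Set.mem_singleton_iff]
      constructor
      · rintro ⟨t1, h1, t2, h2, hlt, rfl⟩
        rw [show Set.Icc a b = S from hSdef.symm, hitz (n + r) j t2 (hSdef ▸ h2),
          hitz (n + r) j t1 (hSdef ▸ h1)]
        simp
      · rintro rfl
        refine ⟨a, hSdef ▸ haS, b, hSdef ▸ hbS, hab, ?_⟩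
        rw [show Set.Icc a b = S from hSdef.symm, hitz (n + r) j b hbS,
          hitz (n + r) j a haS]
        simp
    rw [Finset.sum_congr rfl fun p _ => by rw [hset1 p, csSup_singleton]]
    rw [hset2, csSup_singleton]
    simp
  have hBy0 : B yy = 0 := by
    obtain ⟨Kb, hKb⟩ := hB
    have h1 := hKb yy hmem
    rw [hnorm0, mul_zero] at h1
    exact norm_le_zero_iff.mp h1
  have hByd : B yy = d := by
    have hyrep : yy = ∑ k : Fin (r * m), d k • (fun t (j : Fin m) => Y t j k) := by
      funext t j
      simp [hyydef, hgdef, Finset.sum_apply, Pi.smul_apply, smul_eq_mul]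
    funext p
    rw [hyrep, map_sum]
    have hbc : ∀ k, B (fun t j => Y t j k) p
        = (1 : Matrix (Fin (r * m)) (Fin (r * m)) ℂ) p k := fun k =>
      congrFun (congrFun hYbc p) k
    simp only [map_smul, Finset.sum_apply, Pi.smul_apply, smul_eq_mul]
    rw [Finset.sum_congr rfl fun k _ => by rw [hbc k]]
    simp [Matrix.one_apply]
  rw [hByd] at hBy0
  exact hd0 hBy0
end
end

section
/- Suppose the solution to the parameter-dependent boundary-value problem L(ε)y = f(·,ε), B(ε)y = c(ε) depends continuously on the parameter ε at ε = 0, i.e., conditions (∗) and (∗∗) hold, with ε₁ as in (∗). Then for every ε ∈ [0, ε₁) the operator (L(ε), B(ε)) : (C^{n+r,α})^m → (C^{n,α})^m × ℂ^{rm} is invertible; its inverse converges strongly to (L(0), B(0))^{-1} as ε → 0+, i.e., (L(ε), B(ε))^{-1}(f, c) → (L(0), B(0))^{-1}(f, c) in (C^{n+r,α})^m for all f ∈ (C^{n,α})^m and c ∈ ℂ^{rm}; and there exist κ₂ > 0 and ε₂ ∈ (0, ε₁) such that ‖(L(ε), B(ε))^{-1}‖ ≤ κ₂ for every ε ∈ [0,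 ε₂). -/
open Set Filter Topology

noncomputable section

section AuxLemmas

variable {a b : ℝ} {p : ℕ} {α : ℝ}

lemma natCast_le_withTop {j q : ℕ} (h : j ≤ q) : (j : WithTop ℕ∞) ≤ (q : WithTop ℕ∞) := by
  exact_mod_cast h

lemma iDW_zero (hab : a < b) (j : ℕ) {t : ℝ} (ht : t ∈ Set.Icc a b) :
    iteratedDerivWithin j (fun _ : ℝ => (0 : ℂ)) (Set.Icc a b) t = 0 := by
  have h : iteratedFDerivWithin ℝ j (fun _ : ℝ => (0 : ℂ)) (Set.Icc a b) = 0 :=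
    iteratedFDerivWithin_zero_fun
  simp [iteratedDerivWithin, h]

lemma HolMem_zero (hab : a < b) : HolMem a b p α (fun _ : ℝ => (0 : ℂ)) := by
  refine ⟨contDiffOn_const, 0, fun t₁ h₁ t₂ h₂ hlt => ?_⟩
  rw [iDW_zero hab p h₂, iDW_zero hab p h₁]
  simp

lemma bdd_S (hab : a < b) {j : ℕ} (hj : j ≤ p) {x : ℝ → ℂ}
    (hx : ContDiffOn ℝ p x (Set.Icc a b)) :
    BddAbove {s : ℝ | ∃ t ∈ Set.Icc a b, s = ‖iteratedDerivWithin j x (Set.Icc a b) t‖} := by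
  have hc : ContinuousOn (fun t => ‖iteratedDerivWithin j x (Set.Icc a b) t‖) (Set.Icc a b) :=
    (hx.continuousOn_iteratedDerivWithin (natCast_le_withTop hj) (uniqueDiffOn_Icc hab)).norm
  refine BddAbove.mono ?_ (isCompact_Icc.bddAbove_image hc)
  rintro s ⟨t, ht, rfl⟩
  exact ⟨t, ht, rfl⟩

lemma bdd_T {x : ℝ → ℂ} (hx : HolMem a b p α x) :
    BddAbove {s : ℝ | ∃ t₁ ∈ Set.Icc a b, ∃ t₂ ∈ Set.Icc a b, t₁ < t₂ ∧
      s = ‖iteratedDerivWithin p x (Set.Icc a b) t₂ -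
            iteratedDerivWithin p x (Set.Icc a b) t₁‖ / (t₂ - t₁) ^ α} := by
  obtain ⟨-, C, hC⟩ := hx
  refine ⟨max C 0, ?_⟩
  rintro s ⟨t₁, h₁, t₂, h₂, hlt, rfl⟩
  have hd : (0 : ℝ) < (t₂ - t₁) ^ α := Real.rpow_pos_of_pos (by linarith) α
  rw [div_le_iff₀ hd]
  calc ‖_ - _‖ ≤ C * (t₂ - t₁) ^ α := hC t₁ h₁ t₂ h₂ hlt
    _ ≤ max C 0 * (t₂ - t₁) ^ α := by gcongr; exact le_max_left _ _

lemma holNorm_nonneg (a b : ℝ) (p : ℕ) (α : ℝ) (x : ℝ → ℂ) : 0 ≤ holNorm a b p α x := by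
  refine add_nonneg (Finset.sum_nonneg fun j _ => Real.sSup_nonneg fun s hs => ?_)
    (Real.sSup_nonneg fun s hs => ?_)
  · obtain ⟨t, ht, rfl⟩ := hs
    positivity
  · obtain ⟨t₁, h₁, t₂, h₂, hlt, rfl⟩ := hs
    exact div_nonneg (norm_nonneg _) (Real.rpow_nonneg (by linarith) α)

lemma holNorm_zero (hab : a < b) : holNorm a b p α (fun _ : ℝ => (0 : ℂ)) = 0 := by
  have ha : a ∈ Set.Icc a b := Set.left_mem_Icc.mpr hab.le
  have hb : b ∈ Set.Icc a b := Set.right_mem_Icc.mpr hab.le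
  have hS : ∀ j : ℕ,
      {s : ℝ | ∃ t ∈ Set.Icc a b,
        s = ‖iteratedDerivWithin j (fun _ : ℝ => (0 : ℂ)) (Set.Icc a b) t‖} = {0} := by
    intro j
    ext s
    simp only [Set.mem_setOf_eq, Set.mem_singleton_iff]
    constructor
    · rintro ⟨t, ht, rfl⟩
      rw [iDW_zero hab j ht, norm_zero]
    · rintro rfl
      exact ⟨a, ha, by rw [iDW_zero hab j ha, norm_zero]⟩
  have hT : {s : ℝ | ∃ t₁ ∈ Set.Icc a b, ∃ t₂ ∈ Set.Icc a b, t₁ < t₂ ∧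
      s = ‖iteratedDerivWithin p (fun _ : ℝ => (0 : ℂ)) (Set.Icc a b) t₂ -
            iteratedDerivWithin p (fun _ : ℝ => (0 : ℂ)) (Set.Icc a b) t₁‖ / (t₂ - t₁) ^ α}
      = {0} := by
    ext s
    simp only [Set.mem_setOf_eq, Set.mem_singleton_iff]
    constructor
    · rintro ⟨t₁, h₁, t₂, h₂, hlt, rfl⟩
      rw [iDW_zero hab p h₂, iDW_zero hab p h₁]
      simp
    · rintro rfl
      refine ⟨a, ha, b, hb, hab, ?_⟩
      rw [iDW_zero hab p hb, iDW_zero hab p ha]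
      simp
  unfold holNorm holSemiNorm
  rw [hT, Finset.sum_congr rfl fun j _ => congrArg sSup (hS j)]
  simp

lemma holNorm_neg (hab : a < b) (x : ℝ → ℂ) :
    holNorm a b p α (fun t => -x t) = holNorm a b p α x := by
  have hI : UniqueDiffOn ℝ (Set.Icc a b) := uniqueDiffOn_Icc hab
  have hneg : ∀ (j : ℕ) {t : ℝ}, t ∈ Set.Icc a b →
      iteratedDerivWithin j (fun t => -x t) (Set.Icc a b) t
        = -iteratedDerivWithin j x (Set.Icc a b) t :=
    fun j t ht => iteratedDerivWithin_fun_neg x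
  unfold holNorm holSemiNorm
  congr 1
  · refine Finset.sum_congr rfl fun j _ => congrArg sSup ?_
    ext s
    simp only [Set.mem_setOf_eq]
    constructor
    · rintro ⟨t, ht, rfl⟩
      exact ⟨t, ht, by rw [hneg j ht, norm_neg]⟩
    · rintro ⟨t, ht, rfl⟩
      exact ⟨t, ht, by rw [hneg j ht, norm_neg]⟩
  · refine congrArg sSup ?_
    ext s
    simp only [Set.mem_setOf_eq]
    constructor
    · rintro ⟨t₁, h₁, t₂, h₂, hlt, rfl⟩
      refine ⟨t₁, h₁, t₂, h₂, hlt, ?_⟩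
      rw [hneg p h₂, hneg p h₁, neg_sub_neg, norm_sub_rev]
    · rintro ⟨t₁, h₁, t₂, h₂, hlt, rfl⟩
      refine ⟨t₁, h₁, t₂, h₂, hlt, ?_⟩
      rw [hneg p h₂, hneg p h₁, neg_sub_neg, norm_sub_rev]

lemma holNorm_add_le (hab : a < b) {x y : ℝ → ℂ}
    (hx : HolMem a b p α x) (hy : HolMem a b p α y) :
    holNorm a b p α (fun t => x t + y t) ≤ holNorm a b p α x + holNorm a b p α y := by
  have hI : UniqueDiffOn ℝ (Set.Icc a b) := uniqueDiffOn_Icc hab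
  unfold holNorm holSemiNorm
  rw [add_add_add_comm, ← Finset.sum_add_distrib]
  refine add_le_add (Finset.sum_le_sum fun j hj => ?_) ?_
  · have hj' : j ≤ p := Nat.lt_succ_iff.mp (Finset.mem_range.mp hj)
    refine Real.sSup_le ?_ (add_nonneg (Real.sSup_nonneg fun s hs => ?_)
      (Real.sSup_nonneg fun s hs => ?_))
    · rintro s ⟨t, ht, rfl⟩
      have heq : iteratedDerivWithin j (fun t => x t + y t) (Set.Icc a b) t
          = iteratedDerivWithin j x (Set.Icc a b) t + iteratedDerivWithin j y (Set.Icc a b) t :=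
        iteratedDerivWithin_add ht hI (hx.1.of_le (natCast_le_withTop hj') t ht)
          (hy.1.of_le (natCast_le_withTop hj') t ht)
      rw [heq]
      refine (norm_add_le _ _).trans (add_le_add ?_ ?_)
      · exact le_csSup (bdd_S hab hj' hx.1) ⟨t, ht, rfl⟩
      · exact le_csSup (bdd_S hab hj' hy.1) ⟨t, ht, rfl⟩
    · obtain ⟨t, ht, rfl⟩ := hs; positivity
    · obtain ⟨t, ht, rfl⟩ := hs; positivity
  · refine Real.sSup_le ?_ (add_nonneg (Real.sSup_nonneg fun s hs => ?_)
      (Real.sSup_nonneg fun s hs => ?_))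
    · rintro s ⟨t₁, h₁, t₂, h₂, hlt, rfl⟩
      have e₂ : iteratedDerivWithin p (fun t => x t + y t) (Set.Icc a b) t₂
          = iteratedDerivWithin p x (Set.Icc a b) t₂ + iteratedDerivWithin p y (Set.Icc a b) t₂ :=
        iteratedDerivWithin_add h₂ hI (hx.1 t₂ h₂) (hy.1 t₂ h₂)
      have e₁ : iteratedDerivWithin p (fun t => x t + y t) (Set.Icc a b) t₁
          = iteratedDerivWithin p x (Set.Icc a b) t₁ + iteratedDerivWithin p y (Set.Icc a b) t₁ :=
        iteratedDerivWithin_add h₁ hI (hx.1 t₁ h₁) (hy.1 t₁ h₁)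
      have hd : (0 : ℝ) < (t₂ - t₁) ^ α := Real.rpow_pos_of_pos (by linarith) α
      rw [e₂, e₁]
      have hkey : ‖(iteratedDerivWithin p x (Set.Icc a b) t₂ + iteratedDerivWithin p y (Set.Icc a b) t₂)
          - (iteratedDerivWithin p x (Set.Icc a b) t₁ + iteratedDerivWithin p y (Set.Icc a b) t₁)‖
          ≤ ‖iteratedDerivWithin p x (Set.Icc a b) t₂ - iteratedDerivWithin p x (Set.Icc a b) t₁‖
            + ‖iteratedDerivWithin p y (Set.Icc a b) t₂ - iteratedDerivWithin p y (Set.Icc a b) t₁‖ := by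
        rw [show (iteratedDerivWithin p x (Set.Icc a b) t₂ + iteratedDerivWithin p y (Set.Icc a b) t₂)
            - (iteratedDerivWithin p x (Set.Icc a b) t₁ + iteratedDerivWithin p y (Set.Icc a b) t₁)
            = (iteratedDerivWithin p x (Set.Icc a b) t₂ - iteratedDerivWithin p x (Set.Icc a b) t₁)
              + (iteratedDerivWithin p y (Set.Icc a b) t₂ - iteratedDerivWithin p y (Set.Icc a b) t₁)
          from by ring]
        exact norm_add_le _ _
      calc ‖_ + _ - (_ + _)‖ / (t₂ - t₁) ^ α
          ≤ (‖iteratedDerivWithin p x (Set.Icc a b) t₂ - iteratedDerivWithin p x (Set.Icc a b) t₁‖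
            + ‖iteratedDerivWithin p y (Set.Icc a b) t₂ - iteratedDerivWithin p y (Set.Icc a b) t₁‖)
              / (t₂ - t₁) ^ α := by gcongr
        _ = ‖iteratedDerivWithin p x (Set.Icc a b) t₂ - iteratedDerivWithin p x (Set.Icc a b) t₁‖ / (t₂ - t₁) ^ α
            + ‖iteratedDerivWithin p y (Set.Icc a b) t₂ - iteratedDerivWithin p y (Set.Icc a b) t₁‖ / (t₂ - t₁) ^ α :=
          add_div _ _ _
        _ ≤ _ + _ := add_le_add (le_csSup (bdd_T ⟨hx.1, hx.2⟩) ⟨t₁, h₁, t₂, h₂, hlt, rfl⟩)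
            (le_csSup (bdd_T ⟨hy.1, hy.2⟩) ⟨t₁, h₁, t₂, h₂, hlt, rfl⟩)
    · obtain ⟨t₁, h₁, t₂, h₂, hlt, rfl⟩ := hs
      exact div_nonneg (norm_nonneg _) (Real.rpow_nonneg (by linarith) α)
    · obtain ⟨t₁, h₁, t₂, h₂, hlt, rfl⟩ := hs
      exact div_nonneg (norm_nonneg _) (Real.rpow_nonneg (by linarith) α)

lemma holNorm_smul_le (hab : a < b) (τ : ℂ) {x : ℝ → ℂ} (hx : HolMem a b p α x) :
    holNorm a b p α (fun t => τ • x t) ≤ ‖τ‖ * holNorm a b p α x := by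
  have hI : UniqueDiffOn ℝ (Set.Icc a b) := uniqueDiffOn_Icc hab
  unfold holNorm holSemiNorm
  rw [mul_add, Finset.mul_sum]
  refine add_le_add (Finset.sum_le_sum fun j hj => ?_) ?_
  · have hj' : j ≤ p := Nat.lt_succ_iff.mp (Finset.mem_range.mp hj)
    refine Real.sSup_le ?_ (mul_nonneg (norm_nonneg τ) (Real.sSup_nonneg fun s hs => ?_))
    · rintro s ⟨t, ht, rfl⟩
      have heq : iteratedDerivWithin j (fun t => τ • x t) (Set.Icc a b) t
          = τ • iteratedDerivWithin j x (Set.Icc a b) t :=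
        iteratedDerivWithin_const_smul ht hI τ (hx.1.of_le (natCast_le_withTop hj') t ht)
      rw [heq, norm_smul]
      exact mul_le_mul_of_nonneg_left (le_csSup (bdd_S hab hj' hx.1) ⟨t, ht, rfl⟩) (norm_nonneg τ)
    · obtain ⟨t, ht, rfl⟩ := hs; positivity
  · refine Real.sSup_le ?_ (mul_nonneg (norm_nonneg τ) (Real.sSup_nonneg fun s hs => ?_))
    · rintro s ⟨t₁, h₁, t₂, h₂, hlt, rfl⟩
      have e₂ : iteratedDerivWithin p (fun t => τ • x t) (Set.Icc a b) t₂
          = τ • iteratedDerivWithin p x (Set.Icc a b) t₂ :=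
        iteratedDerivWithin_const_smul h₂ hI τ (hx.1 t₂ h₂)
      have e₁ : iteratedDerivWithin p (fun t => τ • x t) (Set.Icc a b) t₁
          = τ • iteratedDerivWithin p x (Set.Icc a b) t₁ :=
        iteratedDerivWithin_const_smul h₁ hI τ (hx.1 t₁ h₁)
      rw [e₂, e₁, ← smul_sub, norm_smul, mul_div_assoc]
      exact mul_le_mul_of_nonneg_left (le_csSup (bdd_T ⟨hx.1, hx.2⟩) ⟨t₁, h₁, t₂, h₂, hlt, rfl⟩)
        (norm_nonneg τ)
    · obtain ⟨t₁, h₁, t₂, h₂, hlt, rfl⟩ := hs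
      exact div_nonneg (norm_nonneg _) (Real.rpow_nonneg (by linarith) α)

lemma HolMem.smul' (hab : a < b) (τ : ℂ) {x : ℝ → ℂ} (hx : HolMem a b p α x) :
    HolMem a b p α (fun t => τ • x t) := by
  have hI : UniqueDiffOn ℝ (Set.Icc a b) := uniqueDiffOn_Icc hab
  obtain ⟨hcd, C, hC⟩ := hx
  refine ⟨hcd.const_smul τ, ‖τ‖ * C, fun t₁ h₁ t₂ h₂ hlt => ?_⟩
  have e₂ : iteratedDerivWithin p (fun t => τ • x t) (Set.Icc a b) t₂
      = τ • iteratedDerivWithin p x (Set.Icc a b) t₂ :=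
    iteratedDerivWithin_const_smul h₂ hI τ (hcd t₂ h₂)
  have e₁ : iteratedDerivWithin p (fun t => τ • x t) (Set.Icc a b) t₁
      = τ • iteratedDerivWithin p x (Set.Icc a b) t₁ :=
    iteratedDerivWithin_const_smul h₁ hI τ (hcd t₁ h₁)
  rw [e₂, e₁, ← smul_sub, norm_smul, mul_assoc]
  exact mul_le_mul_of_nonneg_left (hC t₁ h₁ t₂ h₂ hlt) (norm_nonneg τ)

lemma HolMem.neg' (hab : a < b) {x : ℝ → ℂ} (hx : HolMem a b p α x) :
    HolMem a b p α (fun t => -x t) := by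
  have hI : UniqueDiffOn ℝ (Set.Icc a b) := uniqueDiffOn_Icc hab
  obtain ⟨hcd, C, hC⟩ := hx
  refine ⟨hcd.neg, C, fun t₁ h₁ t₂ h₂ hlt => ?_⟩
  have e₂ : iteratedDerivWithin p (fun t => -x t) (Set.Icc a b) t₂
      = -iteratedDerivWithin p x (Set.Icc a b) t₂ := iteratedDerivWithin_fun_neg x
  have e₁ : iteratedDerivWithin p (fun t => -x t) (Set.Icc a b) t₁
      = -iteratedDerivWithin p x (Set.Icc a b) t₁ := iteratedDerivWithin_fun_neg x
  rw [e₂, e₁, neg_sub_neg, norm_sub_rev]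
  exact hC t₁ h₁ t₂ h₂ hlt

lemma HolMem.add' (hab : a < b) {x y : ℝ → ℂ}
    (hx : HolMem a b p α x) (hy : HolMem a b p α y) :
    HolMem a b p α (fun t => x t + y t) := by
  have hI : UniqueDiffOn ℝ (Set.Icc a b) := uniqueDiffOn_Icc hab
  obtain ⟨hcx, Cx, hCx⟩ := hx
  obtain ⟨hcy, Cy, hCy⟩ := hy
  refine ⟨hcx.add hcy, Cx + Cy, fun t₁ h₁ t₂ h₂ hlt => ?_⟩
  have e₂ : iteratedDerivWithin p (fun t => x t + y t) (Set.Icc a b) t₂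
      = iteratedDerivWithin p x (Set.Icc a b) t₂ + iteratedDerivWithin p y (Set.Icc a b) t₂ :=
    iteratedDerivWithin_add h₂ hI (hcx t₂ h₂) (hcy t₂ h₂)
  have e₁ : iteratedDerivWithin p (fun t => x t + y t) (Set.Icc a b) t₁
      = iteratedDerivWithin p x (Set.Icc a b) t₁ + iteratedDerivWithin p y (Set.Icc a b) t₁ :=
    iteratedDerivWithin_add h₁ hI (hcx t₁ h₁) (hcy t₁ h₁)
  rw [e₂, e₁]
  calc ‖_‖ ≤ ‖iteratedDerivWithin p x (Set.Icc a b) t₂ - iteratedDerivWithin p x (Set.Icc a b) t₁‖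
      + ‖iteratedDerivWithin p y (Set.Icc a b) t₂ - iteratedDerivWithin p y (Set.Icc a b) t₁‖ := by
        rw [show iteratedDerivWithin p x (Set.Icc a b) t₂ + iteratedDerivWithin p y (Set.Icc a b) t₂
            - (iteratedDerivWithin p x (Set.Icc a b) t₁ + iteratedDerivWithin p y (Set.Icc a b) t₁)
            = (iteratedDerivWithin p x (Set.Icc a b) t₂ - iteratedDerivWithin p x (Set.Icc a b) t₁)
              + (iteratedDerivWithin p y (Set.Icc a b) t₂ - iteratedDerivWithin p y (Set.Icc a b) t₁)
          from by ring]
        exact norm_add_le _ _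
    _ ≤ Cx * (t₂ - t₁) ^ α + Cy * (t₂ - t₁) ^ α :=
        add_le_add (hCx t₁ h₁ t₂ h₂ hlt) (hCy t₁ h₁ t₂ h₂ hlt)
    _ = (Cx + Cy) * (t₂ - t₁) ^ α := by ring

lemma HolMem.sub' (hab : a < b) {x y : ℝ → ℂ}
    (hx : HolMem a b p α x) (hy : HolMem a b p α y) :
    HolMem a b p α (fun t => x t - y t) := by
  have := HolMem.add' hab hx (HolMem.neg' hab hy)
  simpa [sub_eq_add_neg] using this

end AuxLemmas

section VecLemmas

variable {a b : ℝ} {p : ℕ} {α : ℝ} {k : ℕ}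

lemma vHolNorm_nonneg (a b : ℝ) (p : ℕ) (α : ℝ) {k : ℕ} (x : ℝ → (Fin k → ℂ)) :
    0 ≤ vHolNorm a b p α x :=
  Finset.sum_nonneg fun i _ => holNorm_nonneg a b p α _

lemma vHolNorm_zero (hab : a < b) :
    vHolNorm a b p α (fun _ : ℝ => (0 : Fin k → ℂ)) = 0 := by
  unfold vHolNorm
  refine Finset.sum_eq_zero fun i _ => ?_
  exact holNorm_zero hab

lemma vHolMem_zero (hab : a < b) : vHolMem a b p α (fun _ : ℝ => (0 : Fin k → ℂ)) :=
  fun _ => HolMem_zero hab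

lemma vHolMem_smul (hab : a < b) (τ : ℂ) {x : ℝ → (Fin k → ℂ)} (hx : vHolMem a b p α x) :
    vHolMem a b p α (fun t => τ • x t) :=
  fun i => HolMem.smul' hab τ (hx i)

lemma vHolNorm_smul_le (hab : a < b) (τ : ℂ) {x : ℝ → (Fin k → ℂ)} (hx : vHolMem a b p α x) :
    vHolNorm a b p α (fun t => τ • x t) ≤ ‖τ‖ * vHolNorm a b p α x := by
  unfold vHolNorm
  rw [Finset.mul_sum]
  exact Finset.sum_le_sum fun i _ => holNorm_smul_le hab τ (hx i)

lemma vHolNorm_sub_triangle (hab : a < b) {x z : ℝ → (Fin k → ℂ)}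
    (hx : vHolMem a b p α x) (hz : vHolMem a b p α z) :
    vHolNorm a b p α x ≤ vHolNorm a b p α (fun t => x t - z t) + vHolNorm a b p α z := by
  unfold vHolNorm
  rw [← Finset.sum_add_distrib]
  refine Finset.sum_le_sum fun i _ => ?_
  have h1 : HolMem a b p α (fun t => x t i - z t i) := HolMem.sub' hab (hx i) (hz i)
  have h2 := holNorm_add_le hab h1 (hz i)
  have heq : (fun t => (x t i - z t i) + z t i) = fun t => x t i := by
    funext t
    ring
  rw [heq] at h2
  exact h2

lemma IsSol_zero (hab : a < b) {n r m : ℕ}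
    (A' : Fin r → ℝ → Matrix (Fin m) (Fin m) ℂ)
    (B' : (ℝ → (Fin m → ℂ)) →ₗ[ℂ] (Fin (r * m) → ℂ)) :
    IsSol a b n α r m A' B' (fun _ => 0) 0 (fun _ => 0) := by
  refine ⟨vHolMem_zero hab, fun t ht => ?_, ?_⟩
  · have hv : ∀ q : ℕ, vDeriv a b q (fun _ : ℝ => (0 : Fin m → ℂ)) t = 0 := by
      intro q
      funext i
      exact iDW_zero hab q ht
    show vDeriv a b r (fun _ => (0 : Fin m → ℂ)) t
      + ∑ j : Fin r, (A' j t).mulVec (vDeriv a b (j : ℕ) (fun _ => (0 : Fin m → ℂ)) t) = 0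
    simp [hv]
  · exact map_zero B'

lemma IsSol_smul (hab : a < b) {n r m : ℕ} (τ : ℂ)
    {A' : Fin r → ℝ → Matrix (Fin m) (Fin m) ℂ}
    {B' : (ℝ → (Fin m → ℂ)) →ₗ[ℂ] (Fin (r * m) → ℂ)}
    {f : ℝ → (Fin m → ℂ)} {c : Fin (r * m) → ℂ} {y : ℝ → (Fin m → ℂ)}
    (hsol : IsSol a b n α r m A' B' f c y) :
    IsSol a b n α r m A' B' (fun t => τ • f t) (τ • c) (fun t => τ • y t) := by
  have hI : UniqueDiffOn ℝ (Set.Icc a b) := uniqueDiffOn_Icc hab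
  obtain ⟨hy, hL, hBc⟩ := hsol
  refine ⟨vHolMem_smul hab τ hy, fun t ht => ?_, ?_⟩
  · have hv : ∀ q : ℕ, q ≤ n + r → vDeriv a b q (fun s => τ • y s) t = τ • vDeriv a b q y t := by
      intro q hq
      funext i
      have heq : iteratedDerivWithin q (fun s => τ • y s i) (Set.Icc a b) t
          = τ • iteratedDerivWithin q (fun s => y s i) (Set.Icc a b) t :=
        iteratedDerivWithin_const_smul ht hI τ ((hy i).1.of_le (natCast_le_withTop hq) t ht)
      exact heq
    have h1 : vDeriv a b r (fun s => τ • y s) t = τ • vDeriv a b r y t :=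
      hv r (Nat.le_add_left r n)
    have h2 : ∀ j : Fin r, (A' j t).mulVec (vDeriv a b (j : ℕ) (fun s => τ • y s) t)
        = τ • ((A' j t).mulVec (vDeriv a b (j : ℕ) y t)) := by
      intro j
      rw [hv j (le_trans j.2.le (Nat.le_add_left r n)), Matrix.mulVec_smul]
    show vDeriv a b r (fun s => τ • y s) t
      + ∑ j : Fin r, (A' j t).mulVec (vDeriv a b (j : ℕ) (fun s => τ • y s) t) = τ • f t
    rw [h1, Finset.sum_congr rfl fun j _ => h2 j, ← Finset.smul_sum, ← smul_add]
    have := hL t ht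
    show τ • (vDeriv a b r y t + ∑ j : Fin r, (A' j t).mulVec (vDeriv a b (j : ℕ) y t)) = τ • f t
    rw [show vDeriv a b r y t + ∑ j : Fin r, (A' j t).mulVec (vDeriv a b (j : ℕ) y t) = f t
      from this]
  · show B' (τ • y) = τ • c
    rw [map_smul, hBc]

end VecLemmas

lemma vHolNorm_sub_comm {a b : ℝ} {p : ℕ} {α : ℝ} {k : ℕ} (hab : a < b)
    (x z : ℝ → (Fin k → ℂ)) :
    vHolNorm a b p α (fun t => x t - z t) = vHolNorm a b p α (fun t => z t - x t) := by
  unfold vHolNorm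
  refine Finset.sum_congr rfl fun i _ => ?_
  have h := holNorm_neg (p := p) (α := α) hab (fun t => z t i - x t i)
  rw [show (fun t => -(z t i - x t i)) = fun t => x t i - z t i from funext fun t => by ring] at h
  exact h

/-- If the solution depends continuously on ε at ε = 0 ((∗) and (∗∗)), then for every
ε ∈ [0, ε₁) the operator (L(ε), B(ε)) is invertible, the inverses converge strongly to
the inverse at ε = 0, and their norms are uniformly bounded for small ε. -/
theorem inverse_operators_strong_convergence_and_bound
    (a b : ℝ) (hab : a < b) (n : ℕ) (α : ℝ) (hα0 : 0 < α) (hα1 : α ≤ 1)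
    (m r : ℕ) (hm : 1 ≤ m) (hr : 2 ≤ r) (ε₀ : ℝ) (hε₀ : 0 < ε₀)
    (A : ℝ → Fin r → ℝ → Matrix (Fin m) (Fin m) ℂ)
    (hA : ∀ ε ∈ Set.Ico (0 : ℝ) ε₀, ∀ j, mHolMem a b n α (A ε j))
    (B : ℝ → (ℝ → (Fin m → ℂ)) →ₗ[ℂ] (Fin (r * m) → ℂ))
    (hB : ∀ ε ∈ Set.Ico (0 : ℝ) ε₀, ∃ K : ℝ, ∀ y : ℝ → (Fin m → ℂ),
      vHolMem a b (n + r) α y → ‖B ε y‖ ≤ K * vHolNorm a b (n + r) α y)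
    (ε₁ : ℝ) (hε₁0 : 0 < ε₁) (hε₁ : ε₁ < ε₀)
    (hstar : CondStar a b n α r m ε₁ A B)
    (hstarstar : CondStarStar a b n α r m ε₁ A B) :
    (∀ ε ∈ Set.Ico (0 : ℝ) ε₁, ∀ f : ℝ → (Fin m → ℂ), vHolMem a b n α f →
      ∀ c : Fin (r * m) → ℂ,
        ∃ y, IsSol a b n α r m (A ε) (B ε) f c y ∧
          ∀ y', IsSol a b n α r m (A ε) (B ε) f c y' → Set.EqOn y' y (Set.Icc a b)) ∧
    (∀ f : ℝ → (Fin m → ℂ), vHolMem a b n α f → ∀ c : Fin (r * m) → ℂ,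
      ∀ y : ℝ → ℝ → (Fin m → ℂ),
        (∀ ε ∈ Set.Ico (0 : ℝ) ε₁, IsSol a b n α r m (A ε) (B ε) f c (y ε)) →
        Tendsto (fun ε => vHolNorm a b (n + r) α (fun t => y ε t - y 0 t))
          (nhdsWithin 0 (Set.Ioi 0)) (nhds 0)) ∧
    (∃ κ₂ ε₂ : ℝ, 0 < κ₂ ∧ 0 < ε₂ ∧ ε₂ < ε₁ ∧
      ∀ ε ∈ Set.Ico (0 : ℝ) ε₂, ∀ f : ℝ → (Fin m → ℂ), ∀ c : Fin (r * m) → ℂ,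
        ∀ y : ℝ → (Fin m → ℂ), vHolMem a b n α f → IsSol a b n α r m (A ε) (B ε) f c y →
          vHolNorm a b (n + r) α y ≤ κ₂ * (vHolNorm a b n α f + ‖c‖)) := by
  classical
  have hconstf : ∀ f : ℝ → (Fin m → ℂ),
      Tendsto (fun _ : ℝ => vHolNorm a b n α (fun t => f t - f t))
        (nhdsWithin 0 (Set.Ioi 0)) (nhds 0) := by
    intro f
    have h : (fun _ : ℝ => vHolNorm a b n α (fun t => f t - f t)) = fun _ => (0 : ℝ) := by
      funext ε
      rw [show (fun t : ℝ => f t - f t) = (fun _ : ℝ => (0 : Fin m → ℂ)) from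
        funext fun t => sub_self _]
      exact vHolNorm_zero hab
    rw [h]
    exact tendsto_const_nhds
  refine ⟨hstar, ?_, ?_⟩
  · intro f hf c y hy
    exact hstarstar (fun _ => f) (fun _ => c) y (fun ε hε => ⟨hf, hy ε hε⟩) (hconstf f)
      tendsto_const_nhds
  · by_contra hmain
    have key : ∀ κ ε₂ : ℝ, 0 < κ → 0 < ε₂ → ε₂ < ε₁ →
        ∃ ε ∈ Set.Ico (0:ℝ) ε₂, ∃ f c y, vHolMem a b n α f ∧
          IsSol a b n α r m (A ε) (B ε) f c y ∧
          κ * (vHolNorm a b n α f + ‖c‖) < vHolNorm a b (n + r) α y := by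
      intro κ ε₂ h1 h2 h3
      by_contra hc
      push_neg at hc
      exact hmain ⟨κ, ε₂, h1, h2, h3, hc⟩
    by_cases hcase : ∃ κ δ : ℝ, 0 < κ ∧ 0 < δ ∧ δ < ε₁ ∧
        ∀ ε ∈ Set.Ioo (0:ℝ) δ, ∀ f c y, vHolMem a b n α f →
          IsSol a b n α r m (A ε) (B ε) f c y →
          vHolNorm a b (n + r) α y ≤ κ * (vHolNorm a b n α f + ‖c‖)
    · -- Case (i): a uniform bound holds on (0, δ); then badness concentrates at ε = 0.
      obtain ⟨κ, δ, hκ, hδ, hδ1, hbound⟩ := hcase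
      obtain ⟨ε', hε', f, c, y₀, hf, hsol₀, hbad⟩ := key (4 * κ) δ (by linarith) hδ hδ1
      have hnn : 0 ≤ vHolNorm a b n α f + ‖c‖ :=
        add_nonneg (vHolNorm_nonneg _ _ _ _ _) (norm_nonneg _)
      have hε'0 : ε' = 0 := by
        rcases eq_or_lt_of_le hε'.1 with h | h
        · exact h.symm
        · exfalso
          have hb2 := hbound ε' ⟨h, hε'.2⟩ f c y₀ hf hsol₀
          nlinarith
      subst hε'0
      have hN0 : 0 < vHolNorm a b (n + r) α y₀ :=
        lt_of_le_of_lt (mul_nonneg (by linarith) hnn) hbad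
      have hYsol : ∀ ε ∈ Set.Ico (0:ℝ) ε₁,
          IsSol a b n α r m (A ε) (B ε) f c
            (if hε : ε ∈ Set.Ioo (0:ℝ) ε₁ then (hstar ε ⟨hε.1.le, hε.2⟩ f hf c).choose
             else y₀) := by
        intro ε hε
        rcases eq_or_lt_of_le hε.1 with h | h
        · have hnot : ¬ (ε ∈ Set.Ioo (0:ℝ) ε₁) := by
            rw [← h]
            simp
          rw [dif_neg hnot, ← h]
          exact hsol₀
        · have hmem : ε ∈ Set.Ioo (0:ℝ) ε₁ := ⟨h, hε.2⟩
          rw [dif_pos hmem]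
          exact (hstar ε ⟨hmem.1.le, hmem.2⟩ f hf c).choose_spec.1
      have hT := hstarstar (fun _ => f) (fun _ => c)
        (fun ε => if hε : ε ∈ Set.Ioo (0:ℝ) ε₁ then (hstar ε ⟨hε.1.le, hε.2⟩ f hf c).choose
          else y₀)
        (fun ε hε => ⟨hf, hYsol ε hε⟩) (hconstf f) tendsto_const_nhds
      have h0not : ¬ ((0:ℝ) ∈ Set.Ioo (0:ℝ) ε₁) := by simp
      beta_reduce at hT
      rw [dif_neg h0not] at hT
      rw [Metric.tendsto_nhdsWithin_nhds] at hT
      obtain ⟨δ', hδ'0, hprop⟩ := hT (vHolNorm a b (n + r) α y₀ / 4) (by linarith)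
      set εs : ℝ := min (δ/2) (min (δ'/2) (ε₁/2)) with hεs
      have hεpos : 0 < εs := by
        rw [hεs]
        positivity
      have hεδ : εs < δ := lt_of_le_of_lt (min_le_left _ _) (by linarith)
      have hεδ' : εs < δ' := lt_of_le_of_lt ((min_le_right _ _).trans (min_le_left _ _))
        (by linarith)
      have hεε₁ : εs < ε₁ := lt_of_le_of_lt ((min_le_right _ _).trans (min_le_right _ _))
        (by linarith)
      have hmem : εs ∈ Set.Ioo (0:ℝ) ε₁ := ⟨hεpos, hεε₁⟩
      have hcl := hprop (Set.mem_Ioi.mpr hεpos)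
        (by rw [Real.dist_eq, sub_zero, abs_of_pos hεpos]; exact hεδ')
      rw [dif_pos hmem] at hcl
      rw [dist_zero_right, Real.norm_eq_abs, abs_of_nonneg (vHolNorm_nonneg _ _ _ _ _)] at hcl
      have hsolstar := (hstar εs ⟨hmem.1.le, hmem.2⟩ f hf c).choose_spec.1
      have hbnd := hbound εs ⟨hεpos, hεδ⟩ f c
        (hstar εs ⟨hmem.1.le, hmem.2⟩ f hf c).choose hf hsolstar
      have htri := vHolNorm_sub_triangle hab hsol₀.1 hsolstar.1
      rw [vHolNorm_sub_comm hab] at htri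
      linarith
    · -- Case (ii): no uniform bound on any (0, δ); build a diagonal bad family.
      push_neg at hcase
      have hseq : ∀ k : ℕ, ∃ ε ∈ Set.Ioo (0:ℝ) (min (ε₁/2) (1/((k:ℝ)+1))), ∃ f c y,
          vHolMem a b n α f ∧ IsSol a b n α r m (A ε) (B ε) f c y ∧
          ((k:ℝ)+1) * (vHolNorm a b n α f + ‖c‖) < vHolNorm a b (n + r) α y := by
        intro k
        exact hcase ((k:ℝ)+1) _ (by positivity) (lt_min (by linarith) (by positivity))
          ((min_le_left _ _).trans_lt (by linarith))
      choose eps heps F0 C0 Y0 hF0 hsol0 hbig using hseq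
      have hτpos : ∀ k, 0 < vHolNorm a b (n + r) α (Y0 k) := by
        intro k
        refine lt_of_le_of_lt (mul_nonneg (by positivity) (add_nonneg
          (vHolNorm_nonneg _ _ _ _ _) (norm_nonneg _))) (hbig k)
      set σ : ℕ → ℂ := fun k => (((vHolNorm a b (n + r) α (Y0 k))⁻¹ : ℝ) : ℂ) with hσdef
      have hσnorm : ∀ k, ‖σ k‖ = (vHolNorm a b (n + r) α (Y0 k))⁻¹ := by
        intro k
        simp only [hσdef]
        rw [Complex.norm_real, Real.norm_eq_abs, abs_of_pos (inv_pos.mpr (hτpos k))]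
      have hsmall : ∀ k, vHolNorm a b n α (fun t => σ k • F0 k t) + ‖σ k • C0 k‖
          < 1/((k:ℝ)+1) := by
        intro k
        have h1 : vHolNorm a b n α (fun t => σ k • F0 k t)
            ≤ (vHolNorm a b (n + r) α (Y0 k))⁻¹ * vHolNorm a b n α (F0 k) := by
          rw [← hσnorm k]
          exact vHolNorm_smul_le hab _ (hF0 k)
        have h2 : ‖σ k • C0 k‖ = (vHolNorm a b (n + r) α (Y0 k))⁻¹ * ‖C0 k‖ := by
          rw [norm_smul, hσnorm k]
        have hX : vHolNorm a b n α (F0 k) + ‖C0 k‖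
            < vHolNorm a b (n + r) α (Y0 k) / ((k:ℝ)+1) := by
          rw [lt_div_iff₀ (by positivity)]
          nlinarith [hbig k]
        calc vHolNorm a b n α (fun t => σ k • F0 k t) + ‖σ k • C0 k‖
            ≤ (vHolNorm a b (n + r) α (Y0 k))⁻¹ * (vHolNorm a b n α (F0 k) + ‖C0 k‖) := by
              rw [mul_add]
              exact add_le_add h1 (le_of_eq h2)
          _ < (vHolNorm a b (n + r) α (Y0 k))⁻¹
              * (vHolNorm a b (n + r) α (Y0 k) / ((k:ℝ)+1)) :=
              mul_lt_mul_of_pos_left hX (inv_pos.mpr (hτpos k))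
          _ = 1/((k:ℝ)+1) := by
              rw [mul_div_assoc', inv_mul_cancel₀ (hτpos k).ne']
      have hunit : ∀ k, 1 ≤ vHolNorm a b (n + r) α (fun t => σ k • Y0 k t) := by
        intro k
        have hy' : vHolMem a b (n + r) α (fun t => σ k • Y0 k t) :=
          vHolMem_smul hab _ (hsol0 k).1
        have h3 := vHolNorm_smul_le hab ((vHolNorm a b (n + r) α (Y0 k) : ℝ) : ℂ) hy'
        have heq : (fun t => ((vHolNorm a b (n + r) α (Y0 k) : ℝ) : ℂ)
            • (fun s => σ k • Y0 k s) t) = Y0 k := by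
          funext t
          show ((vHolNorm a b (n + r) α (Y0 k) : ℝ) : ℂ) • (σ k • Y0 k t) = Y0 k t
          rw [smul_smul]
          simp only [hσdef]
          rw [← Complex.ofReal_mul, mul_inv_cancel₀ (hτpos k).ne',
            Complex.ofReal_one, one_smul]
        rw [heq, Complex.norm_real, Real.norm_eq_abs, abs_of_pos (hτpos k)] at h3
        nlinarith [hτpos k]
      have h0notin : ¬ (∃ k, eps k = (0:ℝ)) := by
        rintro ⟨k, hk⟩
        exact absurd hk (ne_of_gt (heps k).1)
      have hsolfam : ∀ ε ∈ Set.Ico (0:ℝ) ε₁,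
          vHolMem a b n α (if h : ∃ k, eps k = ε then
              (fun t => σ (Nat.find h) • F0 (Nat.find h) t) else fun _ => 0) ∧
          IsSol a b n α r m (A ε) (B ε)
            (if h : ∃ k, eps k = ε then
              (fun t => σ (Nat.find h) • F0 (Nat.find h) t) else fun _ => 0)
            (if h : ∃ k, eps k = ε then σ (Nat.find h) • C0 (Nat.find h) else 0)
            (if h : ∃ k, eps k = ε then
              (fun t => σ (Nat.find h) • Y0 (Nat.find h) t) else fun _ => 0) := by
        intro ε hε
        by_cases h : ∃ k, eps k = ε
        · simp only [dif_pos h]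
          have hk : eps (Nat.find h) = ε := Nat.find_spec h
          revert hk
          generalize Nat.find h = j
          intro hk
          rw [← hk]
          exact ⟨vHolMem_smul hab _ (hF0 j), IsSol_smul hab _ (hsol0 j)⟩
        · simp only [dif_neg h]
          exact ⟨vHolMem_zero hab, IsSol_zero hab _ _⟩
      have htf : Tendsto (fun ε => vHolNorm a b n α (fun t =>
          (if h : ∃ k, eps k = ε then
            (fun t => σ (Nat.find h) • F0 (Nat.find h) t) else fun _ => 0) t
          - (if h : ∃ k, eps k = (0:ℝ) then
            (fun t => σ (Nat.find h) • F0 (Nat.find h) t) else fun _ => 0) t))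
          (nhdsWithin 0 (Set.Ioi 0)) (nhds 0) := by
        rw [dif_neg h0notin]
        rw [Metric.tendsto_nhdsWithin_nhds]
        intro η hη
        obtain ⟨N, hN⟩ := exists_nat_one_div_lt hη
        refine ⟨Finset.inf' (Finset.range (N+1)) ⟨0, by simp⟩ eps, ?_, ?_⟩
        · exact (Finset.lt_inf'_iff _).mpr fun j _ => (heps j).1
        · intro ε hεIoi hdist
          rw [Real.dist_eq, sub_zero, abs_of_pos (Set.mem_Ioi.mp hεIoi)] at hdist
          rw [dist_zero_right, Real.norm_eq_abs]
          by_cases h : ∃ k, eps k = ε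
          · simp only [dif_pos h, sub_zero]
            rw [abs_of_nonneg (vHolNorm_nonneg _ _ _ _ _)]
            have hk₀N : N + 1 ≤ Nat.find h := by
              by_contra hlt
              push_neg at hlt
              have hle : Finset.inf' (Finset.range (N+1)) ⟨0, by simp⟩ eps ≤ eps (Nat.find h) :=
                Finset.inf'_le _ (Finset.mem_range.mpr hlt)
              rw [Nat.find_spec h] at hle
              linarith
            calc vHolNorm a b n α (fun t => σ (Nat.find h) • F0 (Nat.find h) t)
                ≤ vHolNorm a b n α (fun t => σ (Nat.find h) • F0 (Nat.find h) t)
                  + ‖σ (Nat.find h) • C0 (Nat.find h)‖ :=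
                  le_add_of_nonneg_right (norm_nonneg _)
              _ < 1/((Nat.find h : ℝ)+1) := hsmall _
              _ ≤ 1/((N:ℝ)+1) := by
                  apply one_div_le_one_div_of_le (by positivity)
                  have : ((N:ℝ)) + 1 ≤ (Nat.find h : ℝ) := by exact_mod_cast hk₀N
                  linarith
              _ < η := hN
          · simp only [dif_neg h, sub_self]
            rw [vHolNorm_zero hab, abs_zero]
            exact hη
      have htc : Tendsto
          (fun ε => if h : ∃ k, eps k = ε then σ (Nat.find h) • C0 (Nat.find h) else 0)
          (nhdsWithin 0 (Set.Ioi 0))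
          (nhds (if h : ∃ k, eps k = (0:ℝ) then σ (Nat.find h) • C0 (Nat.find h) else 0)) := by
        rw [dif_neg h0notin]
        rw [Metric.tendsto_nhdsWithin_nhds]
        intro η hη
        obtain ⟨N, hN⟩ := exists_nat_one_div_lt hη
        refine ⟨Finset.inf' (Finset.range (N+1)) ⟨0, by simp⟩ eps, ?_, ?_⟩
        · exact (Finset.lt_inf'_iff _).mpr fun j _ => (heps j).1
        · intro ε hεIoi hdist
          rw [Real.dist_eq, sub_zero, abs_of_pos (Set.mem_Ioi.mp hεIoi)] at hdist
          rw [dist_zero_right]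
          by_cases h : ∃ k, eps k = ε
          · simp only [dif_pos h]
            have hk₀N : N + 1 ≤ Nat.find h := by
              by_contra hlt
              push_neg at hlt
              have hle : Finset.inf' (Finset.range (N+1)) ⟨0, by simp⟩ eps ≤ eps (Nat.find h) :=
                Finset.inf'_le _ (Finset.mem_range.mpr hlt)
              rw [Nat.find_spec h] at hle
              linarith
            calc ‖σ (Nat.find h) • C0 (Nat.find h)‖
                ≤ vHolNorm a b n α (fun t => σ (Nat.find h) • F0 (Nat.find h) t)
                  + ‖σ (Nat.find h) • C0 (Nat.find h)‖ :=
                  le_add_of_nonneg_left (vHolNorm_nonneg _ _ _ _ _)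
              _ < 1/((Nat.find h : ℝ)+1) := hsmall _
              _ ≤ 1/((N:ℝ)+1) := by
                  apply one_div_le_one_div_of_le (by positivity)
                  have : ((N:ℝ)) + 1 ≤ (Nat.find h : ℝ) := by exact_mod_cast hk₀N
                  linarith
              _ < η := hN
          · simp only [dif_neg h, norm_zero]
            exact hη
      have hcontr := hstarstar
        (fun ε => if h : ∃ k, eps k = ε then
          (fun t => σ (Nat.find h) • F0 (Nat.find h) t) else fun _ => 0)
        (fun ε => if h : ∃ k, eps k = ε then σ (Nat.find h) • C0 (Nat.find h) else 0)
        (fun ε => if h : ∃ k, eps k = ε then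
          (fun t => σ (Nat.find h) • Y0 (Nat.find h) t) else fun _ => 0)
        hsolfam htf htc
      -- derive the contradiction from hcontr
      beta_reduce at hcontr
      rw [dif_neg h0notin] at hcontr
      rw [Metric.tendsto_nhdsWithin_nhds] at hcontr
      obtain ⟨δ', hδ'0, hprop⟩ := hcontr (1/2) (by norm_num)
      obtain ⟨K, hK⟩ := exists_nat_one_div_lt hδ'0
      have hdist : dist (eps K) 0 < δ' := by
        rw [Real.dist_eq, sub_zero, abs_of_pos (heps K).1]
        calc eps K < min (ε₁/2) (1/((K:ℝ)+1)) := (heps K).2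
          _ ≤ 1/((K:ℝ)+1) := min_le_right _ _
          _ < δ' := hK
      have hcl := hprop (Set.mem_Ioi.mpr (heps K).1) hdist
      have hex : ∃ k, eps k = eps K := ⟨K, rfl⟩
      simp only [dif_pos hex, sub_zero] at hcl
      rw [dist_zero_right, Real.norm_eq_abs, abs_of_nonneg (vHolNorm_nonneg _ _ _ _ _)] at hcl
      linarith [hunit (Nat.find hex)]
end
end
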